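/- arXiv:0808.1657 — 4 statements merged into one kernel-verified Lean document; each statement's English description precedes it below -/
import Mathlib

section
/- There is an algorithm that, given an integer k ≥ 2, a DFAO M generating a k-automatic sequence a = (a_n)_{n≥0}, and a length l ≥ 1, decides whether a satisfies the property that whenever x is a factor of a of length ≥ l, its reversal x^R is not a factor of a. -/
/-- Run an encoded DFAO transition table from state `q` on a list of base-`k`
digits, least significant digit first (this is `w^R` for a most-significant-first
representation `w`). -/
def dfaoRun (trans : List (List ℕ)) : ℕ → List ℕ → ℕ
  | q, [] => q
  | q, d :: ds => dfaoRun trans ((trans.getD q []).getD d 0) ds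

/-- The encoded DFAO `(trans, q0, out)` over input alphabet `Σ_k = {0,…,k-1}`
generates the sequence `a`: for every `m` and every base-`k` representation `w`
of `m` (given least significant digit first, possibly with trailing zeros,
all digits `< k`), the output on `w` is `a m`. -/
def dfaoGenerates (k : ℕ) (trans : List (List ℕ)) (q0 : ℕ) (out : List ℕ)
    (a : ℕ → ℕ) : Prop :=
  ∀ (m : ℕ) (w : List ℕ), (∀ d ∈ w, d < k) → Nat.ofDigits k w = m →
    a m = out.getD (dfaoRun trans q0 w) 0

/-- The factor `a_i a_{i+1} ⋯ a_{i+L-1}` of the sequence `a`. -/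
def factorAt (a : ℕ → ℕ) (i L : ℕ) : List ℕ :=
  (List.range L).map fun j => a (i + j)

/-- `w` is a factor of the infinite word `a`. -/
def IsFactorOf (a : ℕ → ℕ) (w : List ℕ) : Prop :=
  ∃ i : ℕ, w = factorAt a i w.length

def dfaoStep (trans : List (List ℕ)) (q d : ℕ) : ℕ := (trans.getD q []).getD d 0

@[simp] theorem dfaoRun_nil (trans : List (List ℕ)) (q : ℕ) : dfaoRun trans q [] = q := rfl

@[simp] theorem dfaoRun_cons (trans : List (List ℕ)) (q d : ℕ) (ds : List ℕ) :
    dfaoRun trans q (d :: ds) = dfaoRun trans (dfaoStep trans q d) ds := rfl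

theorem dfaoRun_eq_foldl (trans : List (List ℕ)) (q : ℕ) (w : List ℕ) :
    dfaoRun trans q w = w.foldl (dfaoStep trans) q := by
  induction w generalizing q with
  | nil => rfl
  | cons d ds ih => simp [ih]

theorem dfaoRun_append (trans : List (List ℕ)) (q : ℕ) (u v : List ℕ) :
    dfaoRun trans q (u ++ v) = dfaoRun trans (dfaoRun trans q u) v := by
  simp [dfaoRun_eq_foldl, List.foldl_append]

def padDig (k n len : ℕ) : List ℕ := (List.range len).map fun j => n / k ^ j % k

@[simp] theorem length_padDig (k n len : ℕ) : (padDig k n len).length = len := by simp [padDig]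

theorem padDig_lt {k : ℕ} (hk : 0 < k) (n len : ℕ) : ∀ d ∈ padDig k n len, d < k := by
  simp only [padDig, List.mem_map, List.mem_range]
  rintro d ⟨j, -, rfl⟩
  exact Nat.mod_lt _ hk

theorem ofDigits_padDig {k : ℕ} (hk : 0 < k) (n : ℕ) :
    ∀ len, Nat.ofDigits k (padDig k n len) = n % k ^ len := by
  intro len
  induction len with
  | zero => simp [padDig, Nat.ofDigits, Nat.mod_one]
  | succ len ih =>
    have h1 : padDig k n (len + 1) = padDig k n len ++ [n / k ^ len % k] := by
      simp [padDig, List.range_succ]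
    rw [h1, Nat.ofDigits_append, ih, length_padDig]
    have h2 : Nat.ofDigits k [n / k ^ len % k] = n / k ^ len % k := by
      simp [Nat.ofDigits]
    rw [h2]
    have h3 : k ^ (len + 1) = k ^ len * k := pow_succ k len
    have h4 : n % k ^ (len + 1) % k ^ len = n % k ^ len := by
      rw [Nat.mod_mod_of_dvd _ ⟨k, h3⟩]
    have h5 : n % k ^ (len + 1) / k ^ len = n / k ^ len % k := by
      rw [h3]
      exact Nat.mod_mul_right_div_self ..
    have h6 := Nat.div_add_mod (n % k ^ (len + 1)) (k ^ len)
    calc n % k ^ len + k ^ len * (n / k ^ len % k)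
        = n % k ^ (len + 1) % k ^ len + k ^ len * (n % k ^ (len + 1) / k ^ len) := by
          rw [h4, h5]
      _ = n % k ^ (len + 1) := by omega

def succRep (k : ℕ) : List ℕ → List ℕ
  | [] => [1]
  | d :: w => if d + 1 < k then (d + 1) :: w else 0 :: succRep k w

theorem succRep_lt {k : ℕ} (hk : 2 ≤ k) : ∀ w : List ℕ, (∀ d ∈ w, d < k) →
    ∀ d ∈ succRep k w, d < k := by
  intro w
  induction w with
  | nil => intro _ d hd; simp [succRep] at hd; omega
  | cons c w ih =>
    intro hw d hd
    rw [succRep] at hd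
    split at hd
    · rcases List.mem_cons.1 hd with rfl | hd
      · assumption
      · exact hw d (List.mem_cons_of_mem _ hd)
    · rcases List.mem_cons.1 hd with rfl | hd
      · omega
      · exact ih (fun x hx => hw x (List.mem_cons_of_mem _ hx)) d hd

theorem ofDigits_succRep {k : ℕ} (hk : 2 ≤ k) : ∀ w : List ℕ, (∀ d ∈ w, d < k) →
    Nat.ofDigits k (succRep k w) = Nat.ofDigits k w + 1 := by
  intro w
  induction w with
  | nil => intro _; simp [succRep, Nat.ofDigits]
  | cons c w ih =>
    intro hw
    rw [succRep]
    split_ifs with h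
    · rw [Nat.ofDigits_cons, Nat.ofDigits_cons]; push_cast; ring
    · have hc : c + 1 = k := by
        have := hw c List.mem_cons_self
        omega
      rw [Nat.ofDigits_cons, Nat.ofDigits_cons,
        ih (fun x hx => hw x (List.mem_cons_of_mem _ hx))]
      push_cast
      rw [← hc]
      ring

def natsMax (l : List ℕ) : ℕ := l.foldr max 0

theorem le_natsMax_of_mem : ∀ {l : List ℕ} {x : ℕ}, x ∈ l → x ≤ natsMax l := by
  intro l
  induction l with
  | nil => intro x hx; simp at hx
  | cons a t ih =>
    intro x hx
    rcases List.mem_cons.1 hx with rfl | hx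
    · exact le_max_left _ _
    · exact le_trans (ih hx) (le_max_right _ _)

theorem getD_eq_or_mem {α : Type*} (l : List α) (n : ℕ) (d : α) :
    l.getD n d = d ∨ l.getD n d ∈ l := by
  rcases h : l[n]? with - | x
  · left; simp [List.getD_eq_getElem?_getD, h]
  · right
    have := List.mem_of_getElem? h
    simpa [List.getD_eq_getElem?_getD, h] using this

def stateBound (trans : List (List ℕ)) (q0 : ℕ) : ℕ := max q0 (natsMax (trans.map natsMax))

theorem dfaoStep_le (trans : List (List ℕ)) (q0 q d : ℕ) :
    dfaoStep trans q d ≤ stateBound trans q0 := by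
  unfold dfaoStep
  rcases getD_eq_or_mem trans q [] with h | h
  · rw [h]; simp [stateBound]
  · rcases getD_eq_or_mem (trans.getD q []) d 0 with h2 | h2
    · rw [h2]; exact Nat.zero_le _
    · have : (trans.getD q []).getD d 0 ≤ natsMax (trans.getD q []) := le_natsMax_of_mem h2
      have h3 : natsMax (trans.getD q []) ∈ trans.map natsMax := List.mem_map_of_mem h
      exact le_trans this (le_trans (le_natsMax_of_mem h3) (le_max_right _ _))

theorem q0_le_stateBound (trans : List (List ℕ)) (q0 : ℕ) : q0 ≤ stateBound trans q0 :=
  le_max_left _ _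

theorem dfaoRun_le {trans : List (List ℕ)} {q0 q : ℕ} (hq : q ≤ stateBound trans q0)
    (w : List ℕ) : dfaoRun trans q w ≤ stateBound trans q0 := by
  induction w generalizing q with
  | nil => simpa
  | cons d ds ih => exact ih (dfaoStep_le trans q0 q d)

-- part2: pair automaton + reachability
def toSt (N n : ℕ) : Fin (N + 1) := ⟨min n N, by omega⟩

theorem toSt_coe {N n : ℕ} (h : n ≤ N) : ((toSt N n : Fin (N + 1)) : ℕ) = n := by
  simp [toSt, min_eq_left h]

def pairStep (k : ℕ) (trans : List (List ℕ)) (N d : ℕ)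
    (g : (Fin (N + 1) → Fin (N + 1)) × (Fin (N + 1) → Fin (N + 1))) :
    (Fin (N + 1) → Fin (N + 1)) × (Fin (N + 1) → Fin (N + 1)) :=
  (fun s => g.1 (toSt N (dfaoStep trans s d)),
   fun s => if d + 1 < k then g.1 (toSt N (dfaoStep trans s (d + 1)))
            else g.2 (toSt N (dfaoStep trans s 0)))

def pairInit (trans : List (List ℕ)) (N : ℕ) :
    (Fin (N + 1) → Fin (N + 1)) × (Fin (N + 1) → Fin (N + 1)) :=
  (id, fun s => toSt N (dfaoStep trans s 1))

def pairFun (k : ℕ) (trans : List (List ℕ)) (N : ℕ) (w : List ℕ) :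
    (Fin (N + 1) → Fin (N + 1)) × (Fin (N + 1) → Fin (N + 1)) :=
  w.foldr (pairStep k trans N) (pairInit trans N)

@[simp] theorem pairFun_nil (k : ℕ) (trans : List (List ℕ)) (N : ℕ) :
    pairFun k trans N [] = pairInit trans N := rfl

@[simp] theorem pairFun_cons (k : ℕ) (trans : List (List ℕ)) (N d : ℕ) (w : List ℕ) :
    pairFun k trans N (d :: w) = pairStep k trans N d (pairFun k trans N w) := rfl

section Semantics

variable {k : ℕ} {trans : List (List ℕ)} {N : ℕ}
  (hN : ∀ q d, q ≤ N → dfaoStep trans q d ≤ N)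

include hN

theorem pairFun_fst (w : List ℕ) (s : Fin (N + 1)) :
    (((pairFun k trans N w).1 s : Fin (N + 1)) : ℕ) = dfaoRun trans s w := by
  induction w generalizing s with
  | nil => rfl
  | cons d w ih =>
    have hs : (s : ℕ) ≤ N := by omega
    rw [pairFun_cons, dfaoRun_cons]
    show (((pairFun k trans N w).1 (toSt N (dfaoStep trans s d)) : Fin (N+1)) : ℕ) = _
    rw [ih (toSt N (dfaoStep trans s d)), toSt_coe (hN _ _ hs)]

theorem pairFun_snd (w : List ℕ) (s : Fin (N + 1)) :
    (((pairFun k trans N w).2 s : Fin (N + 1)) : ℕ) = dfaoRun trans s (succRep k w) := by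
  induction w generalizing s with
  | nil =>
    have hs : (s : ℕ) ≤ N := by omega
    show ((toSt N (dfaoStep trans s 1) : Fin (N+1)) : ℕ) = dfaoRun trans s [1]
    rw [toSt_coe (hN _ _ hs)]
    rfl
  | cons d w ih =>
    have hs : (s : ℕ) ≤ N := by omega
    rw [pairFun_cons, succRep]
    show (((if d + 1 < k then (pairFun k trans N w).1 (toSt N (dfaoStep trans s (d + 1)))
        else (pairFun k trans N w).2 (toSt N (dfaoStep trans s 0))) : Fin (N+1)) : ℕ) = _
    split_ifs with h
    · rw [pairFun_fst hN w, toSt_coe (hN _ _ hs)]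
      rfl
    · rw [ih, toSt_coe (hN _ _ hs)]
      rfl

end Semantics

theorem foldr_reach {σ : Type*} [Fintype σ] [DecidableEq σ] (F : ℕ → σ → σ) (e : σ) (k : ℕ) :
    ∀ w : List ℕ, (∀ d ∈ w, d < k) →
      ∃ u : List ℕ, (∀ d ∈ u, d < k) ∧ u.length ≤ Fintype.card σ ∧
        u.foldr F e = w.foldr F e := by
  have main : ∀ n (w : List ℕ), w.length ≤ n → (∀ d ∈ w, d < k) →
      ∃ u : List ℕ, (∀ d ∈ u, d < k) ∧ u.length ≤ Fintype.card σ ∧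
        u.foldr F e = w.foldr F e := by
    intro n
    induction n with
    | zero =>
      intro w hw hd
      exact ⟨w, hd, by omega, rfl⟩
    | succ n ih =>
      intro w hw hd
      by_cases hc : w.length ≤ Fintype.card σ
      · exact ⟨w, hd, hc, rfl⟩
      · push_neg at hc
        have hpos : 0 < w.length := by omega
        have hcard : Fintype.card σ < Fintype.card (Fin w.length) := by simpa using hc
        obtain ⟨i, j, hne, heq⟩ :=
          Fintype.exists_ne_map_eq_of_card_lt (fun j : Fin w.length => (w.drop j).foldr F e)
            hcard
        -- wlog i < j
        rcases Nat.lt_or_ge (i : ℕ) (j : ℕ) with hij | hij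
        case _ =>
          obtain ⟨u, hu1, hu2, hu3⟩ := ih (w.take i ++ w.drop j)
            (by
              have h1 : (w.take (i : ℕ)).length = (i : ℕ) :=
                List.length_take_of_le (le_of_lt i.isLt)
              have h2 : (w.drop (j : ℕ)).length = w.length - (j : ℕ) := List.length_drop ..
              have := j.isLt
              simp only [List.length_append, h1, h2]
              omega)
            (by
              intro d hdm
              rcases List.mem_append.1 hdm with h | h
              · exact hd d (List.mem_of_mem_take h)
              · exact hd d (List.mem_of_mem_drop h))
          refine ⟨u, hu1, hu2, ?_⟩
          rw [hu3, List.foldr_append, ← heq, ← List.foldr_append, List.take_append_drop]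
        case _ =>
          have hij' : (j : ℕ) < (i : ℕ) := by
            rcases Nat.lt_or_ge (j : ℕ) (i : ℕ) with h | h
            · exact h
            · exact absurd (Fin.ext (by omega)) hne
          obtain ⟨u, hu1, hu2, hu3⟩ := ih (w.take j ++ w.drop i)
            (by
              have h1 : (w.take (j : ℕ)).length = (j : ℕ) :=
                List.length_take_of_le (le_of_lt j.isLt)
              have h2 : (w.drop (i : ℕ)).length = w.length - (i : ℕ) := List.length_drop ..
              have := i.isLt
              simp only [List.length_append, h1, h2]
              omega)
            (by
              intro d hdm
              rcases List.mem_append.1 hdm with h | h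
              · exact hd d (List.mem_of_mem_take h)
              · exact hd d (List.mem_of_mem_drop h))
          refine ⟨u, hu1, hu2, ?_⟩
          rw [hu3, List.foldr_append, heq, ← List.foldr_append, List.take_append_drop]
  intro w hd
  exact main w.length w le_rfl hd

theorem card_pairT (N : ℕ) :
    Fintype.card ((Fin (N + 1) → Fin (N + 1)) × (Fin (N + 1) → Fin (N + 1))) =
      ((N + 1) ^ (N + 1)) ^ 2 := by
  rw [Fintype.card_prod, Fintype.card_fun, Fintype.card_fin, sq]

-- part3: main bounding lemma, decision procedure, factor lemmas

theorem factors_bounded {k : ℕ} {trans : List (List ℕ)} {q0 : ℕ} {out : List ℕ} {a : ℕ → ℕ}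
    (hk : 2 ≤ k) (hgen : dfaoGenerates k trans q0 out a) (L i : ℕ) :
    ∃ i' < k ^ L * (k ^ (((stateBound trans q0 + 1) ^ (stateBound trans q0 + 1)) ^ 2) + 1),
      factorAt a i' L = factorAt a i L := by
  set N := stateBound trans q0 with hNdef
  set C := ((N + 1) ^ (N + 1)) ^ 2 with hCdef
  have hN : ∀ q d, q ≤ N → dfaoStep trans q d ≤ N := fun q d _ => dfaoStep_le trans q0 q d
  have hk0 : 0 < k := by omega
  have hk1 : 1 < k := by omega
  have hkL : 0 < k ^ L := pow_pos hk0 L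
  set q := i / k ^ L with hq
  set r := i % k ^ L with hr
  have hrlt : r < k ^ L := Nat.mod_lt _ hkL
  have hi : k ^ L * q + r = i := Nat.div_add_mod i (k ^ L)
  set wq := padDig k q q with hwq
  have hwq_dig : ∀ d ∈ wq, d < k := padDig_lt hk0 q q
  have hwq_val : Nat.ofDigits k wq = q := by
    rw [hwq, ofDigits_padDig hk0]
    exact Nat.mod_eq_of_lt (Nat.lt_pow_self (n := q) hk1)
  obtain ⟨u, hu_dig, hu_len, hu_fold⟩ :=
    foldr_reach (pairStep k trans N) (pairInit trans N) k wq hwq_dig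
  have hu_len' : u.length ≤ C := by
    rw [card_pairT N] at hu_len
    exact hu_len
  have hpair : pairFun k trans N u = pairFun k trans N wq := hu_fold
  set q' := Nat.ofDigits k u with hq'
  have hq'lt : q' < k ^ C :=
    lt_of_lt_of_le (Nat.ofDigits_lt_base_pow_length hk1 hu_dig)
      (Nat.pow_le_pow_right (by omega) hu_len')
  refine ⟨q' * k ^ L + r, ?_, ?_⟩
  · calc q' * k ^ L + r < q' * k ^ L + k ^ L := by omega
      _ = (q' + 1) * k ^ L := by ring
      _ ≤ k ^ C * k ^ L := Nat.mul_le_mul_right _ (by omega)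
      _ ≤ (k ^ C + 1) * k ^ L := Nat.mul_le_mul_right _ (by omega)
      _ = k ^ L * (k ^ C + 1) := by ring
  · unfold factorAt
    apply List.map_congr_left
    intro j hj
    rw [List.mem_range] at hj
    have hjL : j < k ^ L := lt_of_lt_of_le hj (le_of_lt (Nat.lt_pow_self (n := L) hk1))
    have hrj : r + j < 2 * k ^ L := by omega
    have heps : (r + j) / k ^ L = 0 ∨ (r + j) / k ^ L = 1 := by
      have h2 : (r + j) / k ^ L < 2 := Nat.div_lt_of_lt_mul (by omega)
      rcases Nat.lt_or_ge ((r + j) / k ^ L) 1 with h3 | h3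
      · exact Or.inl (Nat.lt_one_iff.mp h3)
      · exact Or.inr (Nat.le_antisymm (Nat.lt_succ_iff.mp h2) h3)
    -- the run on the low digits
    set s := dfaoRun trans q0 (padDig k (r + j) L) with hs
    have hsle : s ≤ N := dfaoRun_le (q0_le_stateBound trans q0) _
    have key : ∀ (x : ℕ) (v : List ℕ), (∀ d ∈ v, d < k) → Nat.ofDigits k v = x →
        a (x * k ^ L + (r + j)) =
          out.getD (dfaoRun trans s
            (if (r + j) / k ^ L = 0 then v else succRep k v)) 0 := by
      intro x v hv hvx
      set v' := if (r + j) / k ^ L = 0 then v else succRep k v with hv'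
      have hv'dig : ∀ d ∈ v', d < k := by
        rw [hv']; split_ifs
        · exact hv
        · exact succRep_lt hk v hv
      have hv'val : Nat.ofDigits k v' = x + (r + j) / k ^ L := by
        rw [hv']; split_ifs with h0
        · simp [hvx, h0]
        · have h1 : (r + j) / k ^ L = 1 := by rcases heps with h | h; exact absurd h h0; exact h
          rw [ofDigits_succRep hk v hv, hvx, h1]
      have happ := hgen (x * k ^ L + (r + j)) (padDig k (r + j) L ++ v')
        (by
          intro d hd
          rcases List.mem_append.1 hd with h | h
          · exact padDig_lt hk0 _ _ d h
          · exact hv'dig d h)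
        (by
          rw [Nat.ofDigits_append, length_padDig, ofDigits_padDig hk0, hv'val]
          have hdm := Nat.div_add_mod (r + j) (k ^ L)
          calc (r + j) % k ^ L + k ^ L * (x + (r + j) / k ^ L)
              = (k ^ L * ((r + j) / k ^ L) + (r + j) % k ^ L) + k ^ L * x := by ring
            _ = (r + j) + k ^ L * x := by rw [hdm]
            _ = x * k ^ L + (r + j) := by ring)
      rw [happ, dfaoRun_append, ← hs]
    have h1 := key q wq hwq_dig hwq_val
    have h2 := key q' u hu_dig rfl
    -- transfer the runs through the pair automaton
    have hfst : dfaoRun trans s u = dfaoRun trans s wq := by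
      have e1 := pairFun_fst (k := k) hN u (toSt N s)
      have e2 := pairFun_fst (k := k) hN wq (toSt N s)
      rw [toSt_coe hsle] at e1 e2
      rw [← e1, ← e2, hpair]
    have hsnd : dfaoRun trans s (succRep k u) = dfaoRun trans s (succRep k wq) := by
      have e1 := pairFun_snd (k := k) hN u (toSt N s)
      have e2 := pairFun_snd (k := k) hN wq (toSt N s)
      rw [toSt_coe hsle] at e1 e2
      rw [← e1, ← e2, hpair]
    have hiq : q * k ^ L + (r + j) = i + j := by
      have : q * k ^ L = k ^ L * q := Nat.mul_comm _ _
      omega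
    rw [hiq] at h1
    rw [show q' * k ^ L + r + j = q' * k ^ L + (r + j) by omega, h2, h1]
    rcases heps with h | h
    · rw [if_pos h, if_pos h, hfst]
    · rw [if_neg (by omega), if_neg (by omega), hsnd]

-- decision procedure ------------------------------------------------------

def seqAt (k : ℕ) (trans : List (List ℕ)) (q0 : ℕ) (out : List ℕ) (m : ℕ) : ℕ :=
  out.getD (dfaoRun trans q0 (padDig k m m)) 0

def facsBound (k : ℕ) (trans : List (List ℕ)) (q0 l : ℕ) : ℕ :=
  k ^ l * (k ^ (((stateBound trans q0 + 1) ^ (stateBound trans q0 + 1)) ^ 2) + 1)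

def facsList (k : ℕ) (trans : List (List ℕ)) (q0 : ℕ) (out : List ℕ) (l : ℕ) :
    List (List ℕ) :=
  (List.range (facsBound k trans q0 l)).map fun i =>
    (List.range l).map fun j => seqAt k trans q0 out (i + j)

def mirrorCheck (x : ℕ × List (List ℕ) × ℕ × List ℕ × ℕ) : Bool :=
  (facsList x.1 x.2.1 x.2.2.1 x.2.2.2.1 x.2.2.2.2).foldl
    (fun b w =>
      b && (facsList x.1 x.2.1 x.2.2.1 x.2.2.2.1 x.2.2.2.2).foldl
        (fun b2 v => b2 && !(decide (v = w.reverse))) true)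
    true

theorem seqAt_eq {k : ℕ} {trans : List (List ℕ)} {q0 : ℕ} {out : List ℕ} {a : ℕ → ℕ}
    (hk : 2 ≤ k) (hgen : dfaoGenerates k trans q0 out a) (m : ℕ) :
    a m = seqAt k trans q0 out m := by
  have hk0 : 0 < k := by omega
  exact hgen m (padDig k m m) (padDig_lt hk0 m m)
    (by rw [ofDigits_padDig hk0]; exact Nat.mod_eq_of_lt (Nat.lt_pow_self (n := m) (by omega : 1 < k)))

theorem facsList_eq {k : ℕ} {trans : List (List ℕ)} {q0 : ℕ} {out : List ℕ} {a : ℕ → ℕ}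
    (hk : 2 ≤ k) (hgen : dfaoGenerates k trans q0 out a) (l : ℕ) :
    facsList k trans q0 out l =
      (List.range (facsBound k trans q0 l)).map fun i => factorAt a i l := by
  unfold facsList
  apply List.map_congr_left
  intro i _
  unfold factorAt
  apply List.map_congr_left
  intro j _
  exact (seqAt_eq hk hgen (i + j)).symm

theorem foldl_and_eq {β : Type*} (g : β → Bool) :
    ∀ (lst : List β) (b : Bool), lst.foldl (fun acc x => acc && g x) b = (b && lst.all g) := by
  intro lst
  induction lst with
  | nil => intro b; simp
  | cons x t ih => intro b; simp [ih, Bool.and_assoc]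

theorem mirrorCheck_iff (x : ℕ × List (List ℕ) × ℕ × List ℕ × ℕ) :
    mirrorCheck x = true ↔
      ∀ w ∈ facsList x.1 x.2.1 x.2.2.1 x.2.2.2.1 x.2.2.2.2,
        ∀ v ∈ facsList x.1 x.2.1 x.2.2.1 x.2.2.2.1 x.2.2.2.2, v ≠ w.reverse := by
  unfold mirrorCheck
  simp only [foldl_and_eq, Bool.true_and, List.all_eq_true, Bool.not_eq_true',
    decide_eq_false_iff_not]

-- factor lemmas ------------------------------------------------------------

@[simp] theorem factorAt_length (a : ℕ → ℕ) (i L : ℕ) : (factorAt a i L).length = L := by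
  simp [factorAt]

theorem factorAt_take (a : ℕ → ℕ) (i L m : ℕ) :
    (factorAt a i L).take m = factorAt a i (min m L) := by
  unfold factorAt
  rw [← List.map_take, List.take_range]

theorem factorAt_append (a : ℕ → ℕ) (i m n : ℕ) :
    factorAt a i (m + n) = factorAt a i m ++ factorAt a (i + m) n := by
  unfold factorAt
  rw [List.range_add, List.map_append, List.map_map]
  congr 1
  apply List.map_congr_left
  intro j _
  simp [Nat.add_assoc]

theorem factorAt_drop (a : ℕ → ℕ) (i L m : ℕ) (h : m ≤ L) :
    (factorAt a i L).drop m = factorAt a (i + m) (L - m) := by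
  set n := L - m with hn
  rw [show L = m + n by omega, factorAt_append, List.drop_left' (factorAt_length a i m)]

-- part4: computability
open Primrec in
theorem primrec_pow : Primrec₂ (fun a b : ℕ => a ^ b) := by
  have h : Primrec fun p : ℕ × ℕ => (List.range p.2).foldl (fun s (_ : ℕ) => s * p.1) 1 :=
    list_foldl (list_range.comp snd) (const 1)
      ((nat_mul.comp (fst.comp snd) (fst.comp fst)).to₂)
  have key : ∀ (a b : ℕ), (List.range b).foldl (fun s (_ : ℕ) => s * a) 1 = a ^ b := by
    intro a b
    induction b with
    | zero => rfl
    | succ b ih => rw [List.range_succ, List.foldl_append, ih, List.foldl_cons, List.foldl_nil,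
        pow_succ]
  exact (h.of_eq fun p => key p.1 p.2).to₂

open Primrec in
theorem primrec_natsMax : Primrec natsMax :=
  (list_foldr .id (const 0)
    ((nat_max.comp (fst.comp snd) (snd.comp snd)).to₂)).of_eq fun l => rfl

open Primrec in
theorem primrec_stateBound : Primrec fun p : List (List ℕ) × ℕ => stateBound p.1 p.2 :=
  (nat_max.comp snd
    (primrec_natsMax.comp (list_map fst (primrec_natsMax.comp snd).to₂))).of_eq fun p => rfl

open Primrec in
theorem primrec_dfaoStep : Primrec fun x : List (List ℕ) × ℕ × ℕ =>
    dfaoStep x.1 x.2.1 x.2.2 :=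
  (list_getD 0).comp ((list_getD ([] : List ℕ)).comp fst (fst.comp snd)) (snd.comp snd)

open Primrec in
theorem primrec_dfaoRun : Primrec fun x : List (List ℕ) × ℕ × List ℕ =>
    dfaoRun x.1 x.2.1 x.2.2 :=
  (list_foldl (snd.comp snd) (fst.comp snd)
    ((primrec_dfaoStep.comp
      ((fst.comp fst).pair ((fst.comp snd).pair (snd.comp snd)))).to₂)).of_eq
    fun x => (dfaoRun_eq_foldl x.1 x.2.1 x.2.2).symm

open Primrec in
theorem primrec_padDig : Primrec fun x : ℕ × ℕ × ℕ => padDig x.1 x.2.1 x.2.2 :=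
  (list_map (list_range.comp (snd.comp snd))
    ((nat_mod.comp
      (nat_div.comp ((fst.comp snd).comp fst)
        (primrec_pow.comp (fst.comp fst) snd))
      (fst.comp fst)).to₂)).of_eq fun x => rfl

open Primrec in
theorem primrec_seqAt : Primrec fun x : (ℕ × List (List ℕ) × ℕ × List ℕ) × ℕ =>
    seqAt x.1.1 x.1.2.1 x.1.2.2.1 x.1.2.2.2 x.2 :=
  ((list_getD 0).comp
    ((snd.comp (snd.comp (snd.comp fst))))
    (primrec_dfaoRun.comp
      ((fst.comp (snd.comp fst)).pair
        ((fst.comp (snd.comp (snd.comp fst))).pair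
          (primrec_padDig.comp
            ((fst.comp fst).pair (snd.pair snd))))))).of_eq fun x => rfl

open Primrec in
theorem primrec_facsBound : Primrec fun x : ℕ × List (List ℕ) × ℕ × List ℕ × ℕ =>
    facsBound x.1 x.2.1 x.2.2.1 x.2.2.2.2 := by
  have pk : Primrec fun x : ℕ × List (List ℕ) × ℕ × List ℕ × ℕ => x.1 := fst
  have pl : Primrec fun x : ℕ × List (List ℕ) × ℕ × List ℕ × ℕ => x.2.2.2.2 :=
    snd.comp (snd.comp (snd.comp snd))
  have pN : Primrec fun x : ℕ × List (List ℕ) × ℕ × List ℕ × ℕ =>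
      stateBound x.2.1 x.2.2.1 :=
    primrec_stateBound.comp ((fst.comp snd).pair (fst.comp (snd.comp snd)))
  have pC : Primrec fun x : ℕ × List (List ℕ) × ℕ × List ℕ × ℕ =>
      ((stateBound x.2.1 x.2.2.1 + 1) ^ (stateBound x.2.1 x.2.2.1 + 1)) ^ 2 :=
    primrec_pow.comp (primrec_pow.comp (succ.comp pN) (succ.comp pN)) (const 2)
  exact (nat_mul.comp (primrec_pow.comp pk pl)
    (succ.comp (primrec_pow.comp pk pC))).of_eq fun x => rfl

set_option maxHeartbeats 1000000 in
open Primrec in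
theorem primrec_facsList : Primrec fun x : ℕ × List (List ℕ) × ℕ × List ℕ × ℕ =>
    facsList x.1 x.2.1 x.2.2.1 x.2.2.2.1 x.2.2.2.2 := by
  have pl : Primrec fun x : ℕ × List (List ℕ) × ℕ × List ℕ × ℕ => x.2.2.2.2 :=
    snd.comp (snd.comp (snd.comp snd))
  -- inner function on ((x, i), j)
  have hinner : Primrec fun y : ((ℕ × List (List ℕ) × ℕ × List ℕ × ℕ) × ℕ) × ℕ =>
      seqAt y.1.1.1 y.1.1.2.1 y.1.1.2.2.1 y.1.1.2.2.2.1 (y.1.2 + y.2) :=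
    primrec_seqAt.comp
      (Primrec.pair
        (Primrec.pair (fst.comp (fst.comp fst))
          (Primrec.pair (fst.comp (snd.comp (fst.comp fst)))
            (Primrec.pair (fst.comp (snd.comp (snd.comp (fst.comp fst))))
              (fst.comp (snd.comp (snd.comp (snd.comp (fst.comp fst))))))))
        (nat_add.comp (snd.comp fst) snd))
  have hmid : Primrec fun y : (ℕ × List (List ℕ) × ℕ × List ℕ × ℕ) × ℕ =>
      (List.range y.1.2.2.2.2).map fun j =>
        seqAt y.1.1 y.1.2.1 y.1.2.2.1 y.1.2.2.2.1 (y.2 + j) :=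
    list_map (list_range.comp (pl.comp fst)) hinner.to₂
  exact (list_map (list_range.comp primrec_facsBound) hmid.to₂).of_eq fun x => rfl

open Primrec in
theorem primrec_mirrorCheck : Primrec mirrorCheck := by
  have hinner2 : Primrec fun y :
      ((ℕ × List (List ℕ) × ℕ × List ℕ × ℕ) × Bool × List ℕ) × Bool × List ℕ =>
      (y.2.1 && !(decide (y.2.2 = y.1.2.2.reverse)) : Bool) :=
    Primrec.and.comp (fst.comp snd)
      (Primrec.not.comp
        (Primrec.eq.comp (snd.comp snd) (list_reverse.comp (snd.comp (snd.comp fst)))).decide)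
  have hinner : Primrec fun y : (ℕ × List (List ℕ) × ℕ × List ℕ × ℕ) × Bool × List ℕ =>
      (facsList y.1.1 y.1.2.1 y.1.2.2.1 y.1.2.2.2.1 y.1.2.2.2.2).foldl
        (fun b2 v => b2 && !(decide (v = y.2.2.reverse))) true :=
    list_foldl (primrec_facsList.comp fst) (const true) hinner2.to₂
  have houter : Primrec fun y : (ℕ × List (List ℕ) × ℕ × List ℕ × ℕ) × Bool × List ℕ =>
      (y.2.1 &&
        (facsList y.1.1 y.1.2.1 y.1.2.2.1 y.1.2.2.2.1 y.1.2.2.2.2).foldl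
          (fun b2 v => b2 && !(decide (v = y.2.2.reverse))) true : Bool) :=
    Primrec.and.comp (fst.comp snd) hinner
  exact (list_foldl primrec_facsList (const true) houter.to₂).of_eq fun x => rfl

theorem computable_mirrorCheck : Computable mirrorCheck := primrec_mirrorCheck.to_comp

-- part5: final theorem

/-- It is decidable, given `k ≥ 2`, a DFAO generating a `k`-automatic sequence
`a`, and a length `l ≥ 1`, whether `a` has the property that whenever `x` is a
factor of `a` of length `≥ l`, its reversal `x^R` is not a factor of `a`. -/
theorem mirrorInvarianceFailure_decidable :
    ∃ f : ℕ × List (List ℕ) × ℕ × List ℕ × ℕ → Bool,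
      Computable f ∧
      ∀ (k : ℕ) (trans : List (List ℕ)) (q0 : ℕ) (out : List ℕ) (a : ℕ → ℕ)
        (l : ℕ),
        2 ≤ k → dfaoGenerates k trans q0 out a → 1 ≤ l →
        (f (k, trans, q0, out, l) = true ↔
          ∀ w : List ℕ, IsFactorOf a w → l ≤ w.length →
            ¬ IsFactorOf a w.reverse) := by
  refine ⟨mirrorCheck, computable_mirrorCheck, ?_⟩
  intro k trans q0 out a l hk hgen hl
  rw [mirrorCheck_iff (k, trans, q0, out, l)]
  dsimp only
  rw [facsList_eq hk hgen l]
  constructor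
  · intro h w hw hlw hrev
    obtain ⟨i, hwi⟩ := hw
    obtain ⟨i2, hwr⟩ := hrev
    have hwrlen : w.reverse.length = w.length := List.length_reverse
    rw [hwrlen] at hwr
    have hp_take : factorAt a i l = w.take l := by
      have h1 : w.take l = factorAt a i (min l w.length) := by
        rw [← factorAt_take, ← hwi]
      rw [h1, min_eq_left hlw]
    have hpr : (factorAt a i l).reverse = factorAt a (i2 + (w.length - l)) l := by
      rw [hp_take, List.reverse_take, hwr,
        factorAt_drop a i2 w.length (w.length - l) (by omega)]
      congr 1
      omega
    obtain ⟨i1', hi1B, h1⟩ := factors_bounded hk hgen l i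
    obtain ⟨i2', hi2B, h2⟩ := factors_bounded hk hgen l (i2 + (w.length - l))
    refine h (factorAt a i1' l) ?_ (factorAt a i2' l) ?_ ?_
    · exact List.mem_map_of_mem (List.mem_range.mpr hi1B)
    · exact List.mem_map_of_mem (List.mem_range.mpr hi2B)
    · rw [h1, h2]
      exact hpr.symm
  · intro h w hw v hv hveq
    obtain ⟨i, hi, hwdef⟩ := List.mem_map.1 hw
    obtain ⟨i2, hi2, hvdef⟩ := List.mem_map.1 hv
    have hwlen : w.length = l := by rw [← hwdef]; exact factorAt_length a i l
    have hwfac : IsFactorOf a w := ⟨i, by rw [hwlen, ← hwdef]⟩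
    have hrevfac : IsFactorOf a w.reverse := by
      refine ⟨i2, ?_⟩
      rw [List.length_reverse, hwlen, ← hveq, ← hvdef]
    exact h w hwfac (by omega) hrevfac
end

section
/- Let a = (a_n)_{n≥0} be a sequence over a finite totally ordered alphabet, and let b = (b_n)_{n≥0} be the lexicographically least sequence in the orbit closure of a. Then for every i ≥ 0 and letter c, b_i = c if and only if there exists j ≥ 0 such that a_{j+i} = c and a_l a_{l+1} ⋯ a_{l+i} ≥ a_j a_{j+1} ⋯ a_{j+i} in the lexicographic order for all l ≥ 0. -/
/-- Lexicographic order on infinite sequences over a linearly ordered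
alphabet: `x ≤ y` iff `x = y` or `x` and `y` agree before some position `n`
and `x n < y n`. -/
def SeqLexLe {Δ : Type*} [LinearOrder Δ] (x y : ℕ → Δ) : Prop :=
  x = y ∨ ∃ n : ℕ, (∀ m : ℕ, m < n → x m = y m) ∧ x n < y n

/-- `b` lies in the orbit closure of `a`: every finite prefix of `b` is a
factor of `a`. -/
def InOrbitClosure {Δ : Type*} (a b : ℕ → Δ) : Prop :=
  ∀ n : ℕ, ∃ i : ℕ, ∀ m : ℕ, m < n → b m = a (i + m)

/-- `a` is a `k`-automatic sequence: there is a DFAO (finite state set `Fin n`,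
transition `δ`, initial state `q0`, output `τ`) which, on every base-`k`
representation of `m` read least significant digit first (i.e. on `w^R`,
possibly with leading zeros in `w`), outputs `a m`. -/
def IsKAutomatic (k : ℕ) {Δ : Type*} (a : ℕ → Δ) : Prop :=
  ∃ (n : ℕ) (δ : Fin n → Fin k → Fin n) (q0 : Fin n) (τ : Fin n → Δ),
    ∀ (m : ℕ) (w : List (Fin k)),
      Nat.ofDigits k (w.map Fin.val) = m → a m = τ (w.foldl δ q0)

/-- Lexicographic comparison of the length-`len` segments of `a` beginning at
positions `j` and `l`: `a_j a_{j+1} ⋯ a_{j+len-1} ≤ a_l a_{l+1} ⋯ a_{l+len-1}`. -/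
def SegLexLe {Δ : Type*} [LinearOrder Δ] (a : ℕ → Δ) (j l len : ℕ) : Prop :=
  (∀ m : ℕ, m < len → a (j + m) = a (l + m)) ∨
    ∃ n : ℕ, n < len ∧ (∀ m : ℕ, m < n → a (j + m) = a (l + m)) ∧
      a (j + n) < a (l + n)

/-- Characterization of the lexicographically least sequence `b` in the orbit
closure of `a`: `b i = c` iff there is `j ≥ 0` with `a (j+i) = c` and
`a_l a_{l+1} ⋯ a_{l+i} ≥ a_j a_{j+1} ⋯ a_{j+i}` for all `l ≥ 0`. -/
theorem lexLeast_orbitClosure_char {Δ : Type*} [Fintype Δ] [LinearOrder Δ]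
    (a b : ℕ → Δ) (hb : InOrbitClosure a b)
    (hleast : ∀ c : ℕ → Δ, InOrbitClosure a c → SeqLexLe b c)
    (i : ℕ) (c : Δ) :
    b i = c ↔ ∃ j : ℕ, a (j + i) = c ∧ ∀ l : ℕ, SegLexLe a j l (i + 1) := by
  classical
  have segLex_cases : ∀ (j l len : ℕ), SegLexLe a j l len ∨
      ∃ n : ℕ, n < len ∧ (∀ m : ℕ, m < n → a (j + m) = a (l + m)) ∧
        a (l + n) < a (j + n) := by
    intro j l len
    by_cases h : ∀ m : ℕ, m < len → a (j + m) = a (l + m)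
    · exact Or.inl (Or.inl h)
    · push_neg at h
      have hex : ∃ m, m < len ∧ a (j + m) ≠ a (l + m) := h
      obtain ⟨hn, hne⟩ := Nat.find_spec hex
      have hbefore : ∀ m, m < Nat.find hex → a (j + m) = a (l + m) := by
        intro m hm
        by_contra hne'
        exact absurd (Nat.find_le ⟨lt_trans hm hn, hne'⟩) (not_le.mpr hm)
      rcases lt_or_gt_of_ne hne with h1 | h1
      · exact Or.inl (Or.inr ⟨_, hn, hbefore, h1⟩)
      · exact Or.inr ⟨_, hn, hbefore, h1⟩
  constructor
  · intro hbi
    obtain ⟨j, hj⟩ := hb (i + 1)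
    refine ⟨j, (hj i (Nat.lt_succ_self i)).symm.trans hbi, ?_⟩
    intro l
    rcases segLex_cases j l (i + 1) with h | ⟨n, hn, hbefJ, hlt⟩
    · exact h
    · exfalso
      have hc : InOrbitClosure a (fun m => a (l + m)) := fun k => ⟨l, fun m _ => rfl⟩
      rcases hleast _ hc with heq | ⟨n', hbef', hlt'⟩
      · have e1 : b n = a (l + n) := congrFun heq n
        have e2 := hj n hn
        rw [e1] at e2
        exact absurd e2.symm (ne_of_gt hlt)
      · simp only [] at hbef' hlt'
        rcases lt_trichotomy n n' with h1 | h1 | h1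
        · have e1 : b n = a (l + n) := hbef' n h1
          have e2 := hj n hn
          rw [e2] at e1
          exact absurd e1 (ne_of_gt hlt)
        · subst h1
          have e2 := hj n hn
          rw [e2] at hlt'
          exact lt_asymm hlt hlt'
        · have e1 : a (j + n') = a (l + n') := hbefJ n' h1
          have e2 : b n' = a (j + n') := hj n' (lt_trans h1 hn)
          rw [e2, e1] at hlt'
          exact lt_irrefl _ hlt'
  · rintro ⟨j, hji, hall⟩
    obtain ⟨j', hj'⟩ := hb (i + 1)
    have hseg := hall j'
    have hc : InOrbitClosure a (fun m => a (j + m)) := fun k => ⟨j, fun m _ => rfl⟩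
    rcases hleast _ hc with heq | ⟨n, hbef, hlt⟩
    · have : b i = a (j + i) := congrFun heq i
      rw [this]; exact hji
    · simp only [] at hbef hlt
      by_cases hni : i < n
      · rw [hbef i hni]; exact hji
      · push_neg at hni
        exfalso
        rcases hseg with hall' | ⟨n', hn', hbef', hlt'⟩
        · have e1 := hall' n (Nat.lt_succ_of_le hni)
          have e2 := hj' n (Nat.lt_succ_of_le hni)
          rw [e2, ← e1] at hlt
          exact lt_irrefl _ hlt
        · rcases lt_trichotomy n n' with h1 | h1 | h1
          · have e1 := hbef' n h1
            have e2 := hj' n (Nat.lt_succ_of_le hni)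
            rw [e2, ← e1] at hlt
            exact lt_irrefl _ hlt
          · subst h1
            have e2 := hj' n hn'
            rw [e2] at hlt
            exact lt_asymm hlt hlt'
          · have e1 := hbef n' h1
            have e2 := hj' n' hn'
            rw [e1] at e2
            rw [← e2] at hlt'
            exact lt_irrefl _ hlt'
end

section
/- Let k ≥ 2 and let a = (a_n)_{n≥0} be a k-automatic sequence over a finite totally ordered alphabet. Then the lexicographically least sequence b in the orbit closure of a is also k-automatic. -/
namespace LexAuto

lemma ofDigits_replicate_zero' (k L : ℕ) : Nat.ofDigits k (List.replicate L (0:ℕ)) = 0 := by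
  induction L with
  | zero => simp
  | succ n ih => simp [List.replicate_succ, Nat.ofDigits_cons, ih]

/-- `R` is a `k`-recognizable relation on `r`-tuples of naturals (LSD-first). -/
def KRec (k r : ℕ) (R : (Fin r → ℕ) → Prop) : Prop :=
  ∃ (Q : Type) (_ : Finite Q) (δ : Q → (Fin r → Fin k) → Q) (q0 : Q) (F : Q → Prop),
    ∀ (v : Fin r → ℕ) (w : List (Fin r → Fin k)),
      (∀ x : Fin r, Nat.ofDigits k (w.map fun c => ((c x).val)) = v x) →
      (F (w.foldl δ q0) ↔ R v)

section
variable {k r : ℕ}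

/-- Prepend a digit coordinate to a digit tuple. -/
def fcons (d : Fin k) (c : Fin r → Fin k) : Fin (r+1) → Fin k := Fin.cons d c

@[simp] lemma fcons_zero (d : Fin k) (c : Fin r → Fin k) : fcons d c 0 = d := rfl

@[simp] lemma fcons_succ (d : Fin k) (c : Fin r → Fin k) (x : Fin r) :
    fcons d c x.succ = c x := by
  simp [fcons]

lemma zipWith_cons_map_zero (u : List (Fin k)) (w : List (Fin r → Fin k))
    (h : u.length = w.length) :
    (List.zipWith fcons u w).map (fun c => ((c 0).val)) = u.map Fin.val := by
  induction u generalizing w with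
  | nil => cases w with
    | nil => simp
    | cons c w => simp at h
  | cons d u ih =>
    cases w with
    | nil => simp at h
    | cons c w =>
      simp only [List.zipWith_cons_cons, List.map_cons, fcons_zero]
      rw [ih w (by simpa using h)]

lemma zipWith_cons_map_succ (u : List (Fin k)) (w : List (Fin r → Fin k))
    (h : u.length = w.length) (x : Fin r) :
    (List.zipWith fcons u w).map (fun c => ((c x.succ).val))
      = w.map (fun c => ((c x).val)) := by
  induction u generalizing w with
  | nil => cases w with
    | nil => simp
    | cons c w => simp at h
  | cons d u ih =>
    cases w with
    | nil => simp at h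
    | cons c w =>
      simp only [List.zipWith_cons_cons, List.map_cons, fcons_succ]
      rw [ih w (by simpa using h)]

lemma W_rep (hk : 2 ≤ k) (v : Fin r → ℕ) (u : List (Fin k)) (w : List (Fin r → Fin k))
    (zs : List (Fin k)) (hu : u.length = w.length)
    (hw : ∀ x : Fin r, Nat.ofDigits k (w.map fun c => ((c x).val)) = v x) :
    ∀ x : Fin (r+1),
      Nat.ofDigits k (((List.zipWith fcons u w ++
          zs.map (fun d => fcons d (fun _ => (⟨0, by omega⟩ : Fin k)))).map
            (fun c : Fin (r+1) → Fin k => ((c x).val)))) =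
      (Fin.cons (Nat.ofDigits k ((u ++ zs).map Fin.val)) v : Fin (r+1) → ℕ) x := by
  intro x
  refine Fin.cases ?_ ?_ x
  · rw [Fin.cons_zero, List.map_append, List.map_map]
    have h1 : (List.zipWith fcons u w).map (fun c => ((c 0).val)) = u.map Fin.val :=
      zipWith_cons_map_zero u w hu
    have h2 : zs.map ((fun c => ((c (0 : Fin (r+1))).val)) ∘
        (fun d => fcons d (fun _ => (⟨0, by omega⟩ : Fin k)))) = zs.map Fin.val := by
      apply List.map_congr_left; intro d _; simp [Function.comp]
    rw [h1, h2, ← List.map_append]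
  · intro x
    rw [Fin.cons_succ, List.map_append, List.map_map]
    have h1 := zipWith_cons_map_succ u w hu x
    have h2 : zs.map ((fun c => ((c x.succ).val)) ∘
        (fun d => fcons d (fun _ => (⟨0, by omega⟩ : Fin k)))) = zs.map (fun _ => (0:ℕ)) := by
      apply List.map_congr_left; intro d _; simp [Function.comp]
    have h3 : Nat.ofDigits k (zs.map fun _ => (0:ℕ)) = 0 := by
      rw [List.map_const', ofDigits_replicate_zero']
    rw [h1, h2, Nat.ofDigits_append, h3, hw x]
    simp

lemma exists_rep (hk : 2 ≤ k) (x L : ℕ) :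
    ∃ u : List (Fin k), u.length = L + (Nat.digits k x).length ∧
      Nat.ofDigits k (u.map Fin.val) = x := by
  have hdig : ∀ d ∈ Nat.digits k x, d < k := fun d hd => Nat.digits_lt_base (by omega) hd
  refine ⟨(Nat.digits k x).attach.map (fun d => ⟨d.1, hdig d.1 d.2⟩) ++
      List.replicate L (⟨0, by omega⟩ : Fin k), ?_, ?_⟩
  · simp [Nat.add_comm]
  · rw [List.map_append, Nat.ofDigits_append]
    have h1 : ((Nat.digits k x).attach.map (fun d => (⟨d.1, hdig d.1 d.2⟩ : Fin k))).map Fin.val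
        = Nat.digits k x := by
      rw [List.map_map]
      simp
    rw [h1, Nat.ofDigits_digits]
    have h2 : (List.replicate L (⟨0, by omega⟩ : Fin k)).map Fin.val = List.replicate L 0 := by
      simp
    rw [h2]
    simp [ofDigits_replicate_zero']

lemma KRec.exists {R : (Fin (r+1) → ℕ) → Prop} (hk : 2 ≤ k) (h : KRec k (r+1) R) :
    KRec k r (fun v => ∃ x : ℕ, R (Fin.cons x v)) := by
  classical
  obtain ⟨Q, hQ, δ, q0, F, hF⟩ := h
  let zf : Fin r → Fin k := fun _ => ⟨0, by omega⟩
  let step : (Q → Prop) → (Fin r → Fin k) → (Q → Prop) :=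
    fun S c q' => ∃ q d, S q ∧ δ q (fcons d c) = q'
  let zstep : Q → Fin k → Q := fun q d => δ q (fcons d zf)
  refine ⟨Q → Prop, inferInstance, step, (fun q => q = q0),
    fun S => ∃ q, S q ∧ ∃ zs : List (Fin k), F (zs.foldl zstep q), fun v w hw => ?_⟩
  have reach : ∀ (w : List (Fin r → Fin k)) (S : Q → Prop) (q' : Q),
      (w.foldl step S) q' ↔ ∃ (u : List (Fin k)) (q1 : Q), u.length = w.length ∧ S q1 ∧
        (List.zipWith fcons u w).foldl δ q1 = q' := by
    intro w
    induction w with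
    | nil =>
      intro S q'
      constructor
      · intro hq; exact ⟨[], q', rfl, hq, rfl⟩
      · rintro ⟨u, q1, hu, hS, hf⟩
        rw [List.length_nil, List.length_eq_zero_iff] at hu
        subst hu; simpa using hf ▸ hS
    | cons c w ih =>
      intro S q'
      rw [List.foldl_cons, ih]
      constructor
      · rintro ⟨u, q1, hu, ⟨q, d, hSq, hδ⟩, hf⟩
        exact ⟨d :: u, q, by simp [hu], hSq, by simp [hδ, hf]⟩
      · rintro ⟨u, q1, hu, hS, hf⟩
        cases u with
        | nil => simp at hu
        | cons d u =>
          refine ⟨u, δ q1 (fcons d c), by simpa using hu, ⟨q1, d, hS, rfl⟩, ?_⟩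
          simpa using hf
  show (∃ q, List.foldl step (fun q => q = q0) w q ∧ ∃ zs : List (Fin k),
      F (zs.foldl zstep q)) ↔ ∃ x, R (Fin.cons x v)
  simp only [reach]
  constructor
  · rintro ⟨q', ⟨u, q1, hu, hq1, hf⟩, zs, hzs⟩
    subst hq1
    refine ⟨Nat.ofDigits k ((u ++ zs).map Fin.val), ?_⟩
    rw [← hF (Fin.cons (Nat.ofDigits k ((u ++ zs).map Fin.val)) v)
      (List.zipWith fcons u w ++ zs.map (fun d => fcons d zf))
      (W_rep hk v u w zs hu hw)]
    rw [List.foldl_append, hf, List.foldl_map]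
    exact hzs
  · rintro ⟨x, hx⟩
    obtain ⟨u', hlen, hval⟩ := exists_rep hk x w.length
    have hlen' : w.length ≤ u'.length := by omega
    set u1 := u'.take w.length with hu1
    set u2 := u'.drop w.length with hu2
    have hu1len : u1.length = w.length := by
      rw [hu1, List.length_take]; omega
    refine ⟨(List.zipWith fcons u1 w).foldl δ q0, ?_, u2, ?_⟩
    · exact ⟨u1, q0, hu1len, rfl, rfl⟩
    · have key : u2.foldl zstep ((List.zipWith fcons u1 w).foldl δ q0)
          = (List.zipWith fcons u1 w ++ u2.map (fun d => fcons d zf)).foldl δ q0 := by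
        rw [List.foldl_append, List.foldl_map]
      rw [key, hF (Fin.cons (Nat.ofDigits k ((u1 ++ u2).map Fin.val)) v) _
        (W_rep hk v u1 w u2 hu1len hw)]
      have : u1 ++ u2 = u' := List.take_append_drop _ _
      rw [this, hval]
      exact hx

lemma ofDigits_lt_pow (hk : 1 ≤ k) {l : List ℕ} (h : ∀ d ∈ l, d < k) :
    Nat.ofDigits k l < k ^ l.length := by
  induction l with
  | nil => simpa using hk
  | cons d l ih =>
    have hd : d < k := h d (by simp)
    have ht : Nat.ofDigits k l < k ^ l.length := ih (fun x hx => h x (by simp [hx]))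
    rw [Nat.ofDigits_cons, List.length_cons, pow_succ, mul_comm (k ^ l.length) k]
    have h2 := Nat.mul_le_mul_left k (Nat.succ_le_of_lt ht)
    rw [Nat.mul_succ] at h2
    omega

lemma KRec.congr {R R' : (Fin r → ℕ) → Prop} (h : KRec k r R)
    (hRR : ∀ v, R v ↔ R' v) : KRec k r R' := by
  obtain ⟨Q, hQ, δ, q0, F, hF⟩ := h
  exact ⟨Q, hQ, δ, q0, F, fun v w hw => (hF v w hw).trans (hRR v)⟩

lemma KRec.not {R : (Fin r → ℕ) → Prop} (h : KRec k r R) :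
    KRec k r (fun v => ¬ R v) := by
  obtain ⟨Q, hQ, δ, q0, F, hF⟩ := h
  exact ⟨Q, hQ, δ, q0, fun q => ¬ F q, fun v w hw => not_congr (hF v w hw)⟩

lemma KRec.and {R1 R2 : (Fin r → ℕ) → Prop} (h1 : KRec k r R1) (h2 : KRec k r R2) :
    KRec k r (fun v => R1 v ∧ R2 v) := by
  obtain ⟨Q1, hQ1, δ1, q1, F1, hF1⟩ := h1
  obtain ⟨Q2, hQ2, δ2, q2, F2, hF2⟩ := h2
  refine ⟨Q1 × Q2, inferInstance, fun p c => (δ1 p.1 c, δ2 p.2 c), (q1, q2),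
    fun p => F1 p.1 ∧ F2 p.2, fun v w hw => ?_⟩
  have key : ∀ (w : List (Fin r → Fin k)) (p : Q1 × Q2),
      w.foldl (fun p c => (δ1 p.1 c, δ2 p.2 c)) p = (w.foldl δ1 p.1, w.foldl δ2 p.2) := by
    intro w
    induction w with
    | nil => intro p; rfl
    | cons c w ih => intro p; simp only [List.foldl_cons]; exact ih _
  rw [key]
  exact and_congr (hF1 v w hw) (hF2 v w hw)

lemma KRec.comp {r' : ℕ} {R : (Fin r → ℕ) → Prop} (h : KRec k r R) (f : Fin r → Fin r') :
    KRec k r' (fun v => R (fun x => v (f x))) := by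
  obtain ⟨Q, hQ, δ, q0, F, hF⟩ := h
  refine ⟨Q, hQ, fun q c => δ q (fun x => c (f x)), q0, F, fun v w hw => ?_⟩
  have key : w.foldl (fun q c => δ q fun x => c (f x)) q0
      = (w.map (fun c x => c (f x))).foldl δ q0 := by
    rw [List.foldl_map]
  rw [key]
  refine hF _ _ (fun x => ?_)
  rw [List.map_map]
  exact hw (f x)

lemma lt_lex_helper {x y K cx cy : ℕ} (hx : x < K) (hcc : cx < cy) :
    x + K * cx < y + K * cy := by
  have h1 : K * (cx + 1) ≤ K * cy := Nat.mul_le_mul_left _ (by omega)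
  rw [Nat.mul_add, Nat.mul_one] at h1
  omega

/-- LSD-first comparator step. -/
def cmpStep (k : ℕ) : Bool → (Fin 2 → Fin k) → Bool := fun s c =>
  if (c 0).val < (c 1).val then true else if (c 1).val < (c 0).val then false else s

lemma KRec.lt (hk : 2 ≤ k) : KRec k 2 (fun v => v 0 < v 1) := by
  classical
  refine ⟨Bool, inferInstance, cmpStep k, false, fun s => s = true, fun v w hw => ?_⟩
  show (w.foldl (cmpStep k) false = true) ↔ v 0 < v 1
  rw [← hw 0, ← hw 1]
  clear hw
  induction w using List.reverseRecOn with
  | nil => simp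
  | append_singleton w c ih =>
    rw [List.foldl_append, List.foldl_cons, List.foldl_nil]
    have hone : ∀ (i : Fin 2), Nat.ofDigits k (((w ++ [c]).map fun cc => ((cc i).val)))
        = Nat.ofDigits k (w.map fun cc => ((cc i).val)) + k ^ w.length * (c i).val := by
      intro i
      rw [List.map_append, Nat.ofDigits_append, List.length_map]
      simp [Nat.ofDigits_cons]
    rw [hone 0, hone 1]
    have hbound : ∀ (i : Fin 2), Nat.ofDigits k (w.map fun cc => ((cc i).val)) < k ^ w.length := by
      intro i
      have hlt : ∀ d ∈ (w.map fun cc : Fin 2 → Fin k => ((cc i).val)), d < k := by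
        intro d hd
        simp only [List.mem_map] at hd
        obtain ⟨cc, _, rfl⟩ := hd
        exact (cc i).isLt
      have h := ofDigits_lt_pow (show 1 ≤ k by omega) hlt
      simpa using h
    have hxlt := hbound 0
    have hylt := hbound 1
    clear hbound hone
    generalize hX : Nat.ofDigits k (w.map fun cc : Fin 2 → Fin k => ((cc 0).val)) = x at ih hxlt ⊢
    generalize hY : Nat.ofDigits k (w.map fun cc : Fin 2 → Fin k => ((cc 1).val)) = y at ih hylt ⊢
    clear hX hY
    rcases lt_trichotomy ((c 0).val) ((c 1).val) with hc | hc | hc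
    · have hs : cmpStep k (w.foldl (cmpStep k) false) c = true := by
        simp only [cmpStep, if_pos hc]
      rw [hs]
      exact iff_of_true rfl (lt_lex_helper hxlt hc)
    · have hn1 : ¬ ((c 0).val < (c 1).val) := by omega
      have hn2 : ¬ ((c 1).val < (c 0).val) := by omega
      have hs : cmpStep k (w.foldl (cmpStep k) false) c = w.foldl (cmpStep k) false := by
        simp only [cmpStep, if_neg hn1, if_neg hn2]
      rw [hs, ih, hc]
      constructor
      · intro h; omega
      · intro h; omega
    · have hn1 : ¬ ((c 0).val < (c 1).val) := by omega
      have hs : cmpStep k (w.foldl (cmpStep k) false) c = false := by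
        simp only [cmpStep, if_neg hn1, if_pos hc]
      rw [hs]
      have := lt_lex_helper (y := x) hylt hc
      constructor
      · intro h; exact absurd h (by simp)
      · intro h; omega

lemma modhelp {k g L M : ℕ} (hk1 : 0 < k) (hg : g < k) :
    (g + k * M) % k ^ (L+1) = g + k * (M % k ^ L) := by
  have hpos : 0 < k ^ L := Nat.pow_pos hk1
  have hdm := Nat.div_add_mod M (k ^ L)
  have h1 : M % k ^ L < k ^ L := Nat.mod_lt _ hpos
  have hsplit : g + k * M = g + k * (M % k ^ L) + (M / k ^ L) * (k ^ L * k) := by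
    calc g + k * M = g + k * (k ^ L * (M / k ^ L) + M % k ^ L) := by rw [hdm]
    _ = g + k * (M % k ^ L) + (M / k ^ L) * (k ^ L * k) := by ring
  rw [pow_succ, hsplit, Nat.add_mul_mod_self_right]
  apply Nat.mod_eq_of_lt
  have h2 := Nat.mul_le_mul_left k (Nat.succ_le_of_lt h1)
  rw [Nat.mul_succ] at h2
  have h3 : k ^ L * k = k * k ^ L := by ring
  omega

lemma carryhelp {k g L M : ℕ} (hk1 : 0 < k) (hg : g < k) :
    (k ^ (L+1) ≤ g + k * M) ↔ (k ^ L ≤ M) := by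
  have hpos : 0 < k ^ L := Nat.pow_pos hk1
  rw [pow_succ]
  have h3 : k ^ L * k = k * k ^ L := by ring
  constructor
  · intro h
    by_contra hM
    push_neg at hM
    have h2 := Nat.mul_le_mul_left k (Nat.succ_le_of_lt hM)
    rw [Nat.mul_succ] at h2
    omega
  · intro h
    have h2 := Nat.mul_le_mul_left k h
    omega

lemma digit_split {k dv ev cvv : ℕ} (hk1 : 0 < k) (hd : dv < k) (he : ev < k) (hc : cvv ≤ 1)
    (X' Y' : ℕ) :
    (dv + k * X') + (ev + k * Y') + cvv
      = (dv + ev + cvv) % k + k * (X' + Y' + (if k ≤ dv + ev + cvv then 1 else 0)) := by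
  by_cases h : k ≤ dv + ev + cvv
  · have hmod : (dv + ev + cvv) % k = dv + ev + cvv - k := by
      rw [Nat.mod_eq_sub_mod h, Nat.mod_eq_of_lt (by omega)]
    rw [if_pos h, hmod]
    have h4 : k * (X' + Y' + 1) = k * X' + k * Y' + k := by ring
    omega
  · have hmod : (dv + ev + cvv) % k = dv + ev + cvv := Nat.mod_eq_of_lt (by omega)
    rw [if_neg h, hmod]
    have h4 : k * (X' + Y' + 0) = k * X' + k * Y' := by ring
    omega

section Adder
variable {k na : ℕ}

/-- One step of an LSD-first adder feeding the sum digit into a DFAO. -/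
def addStep (hk1 : 0 < k) (δa : Fin na → Fin k → Fin na) :
    (Bool × Fin na) → (Fin k × Fin k) → (Bool × Fin na) :=
  fun p de =>
    (decide (k ≤ de.1.val + de.2.val + (if p.1 then 1 else 0)),
     δa p.2 ⟨(de.1.val + de.2.val + (if p.1 then 1 else 0)) % k, Nat.mod_lt _ hk1⟩)

lemma addStep_spec (hk1 : 0 < k) (δa : Fin na → Fin k → Fin na) :
    ∀ (w : List (Fin k × Fin k)) (cb : Bool) (q : Fin na),
      ∃ u : List (Fin k), u.length = w.length ∧
        Nat.ofDigits k (u.map Fin.val) =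
          (Nat.ofDigits k (w.map fun p => p.1.val) + Nat.ofDigits k (w.map fun p => p.2.val)
            + (if cb then 1 else 0)) % k ^ w.length ∧
        w.foldl (addStep hk1 δa) (cb, q) =
          (decide (k ^ w.length ≤ Nat.ofDigits k (w.map fun p => p.1.val)
              + Nat.ofDigits k (w.map fun p => p.2.val) + (if cb then 1 else 0)),
           u.foldl δa q) := by
  intro w
  induction w with
  | nil =>
    intro cb q
    refine ⟨[], rfl, by simp [Nat.mod_one], ?_⟩
    cases cb <;> simp
  | cons de w' ih =>
    rcases de with ⟨d, e⟩
    intro cb q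
    obtain ⟨u', hlen, hval, hfold⟩ := ih (decide (k ≤ d.val + e.val + (if cb then 1 else 0)))
      (δa q ⟨(d.val + e.val + (if cb then 1 else 0)) % k, Nat.mod_lt _ hk1⟩)
    refine ⟨⟨(d.val + e.val + (if cb then 1 else 0)) % k, Nat.mod_lt _ hk1⟩ :: u',
      by simp [hlen], ?_, ?_⟩
    · rw [List.map_cons, Nat.ofDigits_cons, hval, List.length_cons]
      simp only [List.map_cons, Nat.ofDigits_cons, decide_eq_true_eq]
      rw [digit_split hk1 d.isLt e.isLt (by split <;> omega) _ _,
        modhelp hk1 (Nat.mod_lt _ hk1)]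
    · rw [List.foldl_cons]
      have hstep : addStep hk1 δa (cb, q) (d, e) =
          (decide (k ≤ d.val + e.val + (if cb then 1 else 0)),
           δa q ⟨(d.val + e.val + (if cb then 1 else 0)) % k, Nat.mod_lt _ hk1⟩) := rfl
      rw [hstep, hfold, List.foldl_cons]
      congr 1
      simp only [List.map_cons, Nat.ofDigits_cons, List.length_cons, decide_eq_true_eq,
        decide_eq_decide]
      rw [digit_split hk1 d.isLt e.isLt (by split <;> omega) _ _]
      exact (carryhelp hk1 (Nat.mod_lt _ hk1)).symm

end Adder

section Atom
variable {k na : ℕ} {Δ : Type*}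

/-- Flush a pending carry into the DFAO. -/
def finishAdd (hk2 : 1 < k) (δa : Fin na → Fin k → Fin na) (p : Bool × Fin na) : Fin na :=
  if p.1 then δa p.2 ⟨1, hk2⟩ else p.2

lemma adder_output (hk1 : 0 < k) (hk2 : 1 < k) (a : ℕ → Δ)
    (δa : Fin na → Fin k → Fin na) (qa0 : Fin na) (τa : Fin na → Δ)
    (haut : ∀ (m : ℕ) (u : List (Fin k)),
      Nat.ofDigits k (u.map Fin.val) = m → a m = τa (u.foldl δa qa0))
    (w : List (Fin k × Fin k)) (X Y : ℕ)
    (hX : Nat.ofDigits k (w.map fun p => p.1.val) = X)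
    (hY : Nat.ofDigits k (w.map fun p => p.2.val) = Y) :
    τa (finishAdd hk2 δa (w.foldl (addStep hk1 δa) (false, qa0))) = a (X + Y) := by
  obtain ⟨u, hlen, hval, hfold⟩ := addStep_spec hk1 δa w false qa0
  rw [hX, hY] at hval hfold
  simp only [Bool.false_eq_true, if_false, Nat.add_zero] at hval hfold
  have hXlt : X < k ^ w.length := by
    rw [← hX]
    have h := ofDigits_lt_pow (k := k) (by omega)
      (l := w.map fun p => p.1.val) ?_
    · simpa using h
    · intro dd hd
      simp only [List.mem_map] at hd
      obtain ⟨p, _, rfl⟩ := hd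
      exact p.1.isLt
  have hYlt : Y < k ^ w.length := by
    rw [← hY]
    have h := ofDigits_lt_pow (k := k) (by omega)
      (l := w.map fun p => p.2.val) ?_
    · simpa using h
    · intro dd hd
      simp only [List.mem_map] at hd
      obtain ⟨p, _, rfl⟩ := hd
      exact p.2.isLt
  rw [hfold]
  by_cases h : k ^ w.length ≤ X + Y
  · have hd : decide (k ^ w.length ≤ X + Y) = true := by simpa using h
    rw [hd]
    show τa (δa (u.foldl δa qa0) ⟨1, hk2⟩) = a (X + Y)
    have hfoldapp : (u ++ [(⟨1, hk2⟩ : Fin k)]).foldl δa qa0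
        = δa (u.foldl δa qa0) ⟨1, hk2⟩ := by
      rw [List.foldl_append, List.foldl_cons, List.foldl_nil]
    rw [← hfoldapp]
    refine (haut (X + Y) (u ++ [⟨1, hk2⟩]) ?_).symm
    rw [List.map_append, Nat.ofDigits_append, hval, List.length_map, hlen]
    have hmod : (X + Y) % k ^ w.length = X + Y - k ^ w.length := by
      rw [Nat.mod_eq_sub_mod h, Nat.mod_eq_of_lt (by omega)]
    rw [hmod]
    simp [Nat.ofDigits_cons, Nat.ofDigits_nil]
    omega
  · have hd : decide (k ^ w.length ≤ X + Y) = false := by simpa using h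
    rw [hd]
    show τa (u.foldl δa qa0) = a (X + Y)
    refine (haut (X + Y) u ?_).symm
    rw [hval, Nat.mod_eq_of_lt (by omega)]

lemma KRec.aAtom (hk : 2 ≤ k) (a : ℕ → Δ)
    (δa : Fin na → Fin k → Fin na) (qa0 : Fin na) (τa : Fin na → Δ)
    (haut : ∀ (m : ℕ) (u : List (Fin k)),
      Nat.ofDigits k (u.map Fin.val) = m → a m = τa (u.foldl δa qa0))
    (P : Δ → Δ → Prop) :
    KRec k 4 (fun v => P (a (v 0 + v 1)) (a (v 2 + v 3))) := by
  have hk1 : 0 < k := by omega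
  have hk2 : 1 < k := by omega
  classical
  refine ⟨(Bool × Fin na) × (Bool × Fin na), inferInstance,
    fun p c => (addStep hk1 δa p.1 (c 0, c 1), addStep hk1 δa p.2 (c 2, c 3)),
    ((false, qa0), (false, qa0)),
    fun p => P (τa (finishAdd hk2 δa p.1)) (τa (finishAdd hk2 δa p.2)),
    fun v w hw => ?_⟩
  have key : ∀ (w : List (Fin 4 → Fin k)) (p : (Bool × Fin na) × (Bool × Fin na)),
      w.foldl (fun p c => (addStep hk1 δa p.1 (c 0, c 1), addStep hk1 δa p.2 (c 2, c 3))) p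
      = ((w.map (fun c => (c 0, c 1))).foldl (addStep hk1 δa) p.1,
         (w.map (fun c => (c 2, c 3))).foldl (addStep hk1 δa) p.2) := by
    intro w
    induction w with
    | nil => intro p; rfl
    | cons c w ih =>
      intro p
      simp only [List.foldl_cons, List.map_cons]
      exact ih _
  rw [key]
  have hmap : ∀ (i j : Fin 4),
      Nat.ofDigits k ((w.map (fun c => (c i, c j))).map fun p => p.1.val) = v i ∧
      Nat.ofDigits k ((w.map (fun c => (c i, c j))).map fun p => p.2.val) = v j := by
    intro i j
    constructor
    · rw [List.map_map]
      exact hw i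
    · rw [List.map_map]
      exact hw j
  have h1 := adder_output hk1 hk2 a δa qa0 τa haut (w.map (fun c => (c 0, c 1)))
    (v 0) (v 1) (hmap 0 1).1 (hmap 0 1).2
  have h2 := adder_output hk1 hk2 a δa qa0 τa haut (w.map (fun c => (c 2, c 3)))
    (v 2) (v 3) (hmap 2 3).1 (hmap 2 3).2
  show P (τa (finishAdd hk2 δa _)) (τa (finishAdd hk2 δa _)) ↔ P (a (v 0 + v 1)) (a (v 2 + v 3))
  rw [h1, h2]

end Atom

section Comb
variable {Δ : Type*} [LinearOrder Δ] [Fintype Δ]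

/-- Window at `j` is lexicographically smaller than window at `i` (length `L`). -/
def WinLt (a : ℕ → Δ) (j i L : ℕ) : Prop :=
  ∃ t, t < L ∧ (∀ s, s < t → a (j + s) = a (i + s)) ∧ a (j + t) < a (i + t)

/-- Window at `i` of length `L` is lexicographically minimal. -/
def MinWin (a : ℕ → Δ) (i L : ℕ) : Prop := ∀ j, ¬ WinLt a j i L

noncomputable def enc (d : Δ) : ℕ := ((Fintype.orderIsoFinOfCardEq Δ rfl).symm d).val

lemma enc_lt (d : Δ) : enc d < Fintype.card Δ := ((Fintype.orderIsoFinOfCardEq Δ rfl).symm d).isLt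

lemma enc_mono {d d' : Δ} (h : d < d') : enc d < enc d' := by
  have := (Fintype.orderIsoFinOfCardEq Δ rfl).symm.lt_iff_lt.mpr h
  exact this

noncomputable def EL (a : ℕ → Δ) (i : ℕ) : ℕ → ℕ
  | 0 => 0
  | (L+1) => EL a i L * Fintype.card Δ + enc (a (i + L))

lemma EL_congr {a : ℕ → Δ} {j i : ℕ} : ∀ {L : ℕ}, (∀ t, t < L → a (j + t) = a (i + t)) →
    EL a j L = EL a i L := by
  intro L
  induction L with
  | zero => intro _; rfl
  | succ L ih =>
    intro h
    show EL a j L * _ + enc (a (j + L)) = EL a i L * _ + enc (a (i + L))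
    rw [ih (fun t ht => h t (by omega)), h L (by omega)]

lemma mul_add_lt_helper {A B D x y : ℕ} (h : A < B) (hx : x < D) :
    A * D + x < B * D + y := by
  have h2 := Nat.mul_le_mul_right D (Nat.succ_le_of_lt h)
  rw [Nat.succ_mul] at h2
  omega

lemma EL_lt {a : ℕ → Δ} {j i : ℕ} : ∀ {L : ℕ}, WinLt a j i L → EL a j L < EL a i L := by
  intro L
  induction L with
  | zero => rintro ⟨t, ht, _⟩; omega
  | succ L ih =>
    rintro ⟨t, ht, heq, hlt⟩
    show EL a j L * _ + enc (a (j + L)) < EL a i L * _ + enc (a (i + L))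
    by_cases hc : t = L
    · subst hc
      rw [EL_congr heq]
      have := enc_mono hlt
      omega
    · have hwin : WinLt a j i L := ⟨t, by omega, heq, hlt⟩
      exact mul_add_lt_helper (ih hwin) (enc_lt _)

lemma exists_minwin (a : ℕ → Δ) (L : ℕ) : ∃ i, MinWin a i L := by
  have hne : (Set.range (fun i => EL a i L)).Nonempty := ⟨EL a 0 L, 0, rfl⟩
  obtain ⟨i, hi⟩ := Nat.sInf_mem hne
  refine ⟨i, fun j hwin => ?_⟩
  have h1 := EL_lt hwin
  have h2 : sInf (Set.range (fun i => EL a i L)) ≤ EL a j L := Nat.sInf_le ⟨j, rfl⟩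
  have hi' : EL a i L = sInf (Set.range (fun i => EL a i L)) := hi
  omega

lemma minwin_prefix {a b : ℕ → Δ} (hb : InOrbitClosure a b)
    (hleast : ∀ c : ℕ → Δ, InOrbitClosure a c → SeqLexLe b c)
    (m i : ℕ) (hmin : MinWin a i (m+1)) : b m = a (i + m) := by
  have hc : InOrbitClosure a (fun t => a (i + t)) := fun n => ⟨i, fun t _ => rfl⟩
  rcases hleast _ hc with heq | ⟨s, hag, hlt⟩
  · exact congrFun heq m
  · by_cases hs : s ≤ m
    · exfalso
      obtain ⟨jj, hjj⟩ := hb (s+1)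
      refine hmin jj ⟨s, by omega, fun s' hs' => ?_, ?_⟩
      · rw [← hjj s' (by omega)]
        exact hag s' hs'
      · rw [← hjj s (by omega)]
        exact hlt
    · exact hag m (by omega)

lemma bval_iff {a b : ℕ → Δ} (hb : InOrbitClosure a b)
    (hleast : ∀ c : ℕ → Δ, InOrbitClosure a c → SeqLexLe b c) (m : ℕ) (d : Δ) :
    (∃ i, MinWin a i (m+1) ∧ a (i + m) = d) ↔ b m = d := by
  constructor
  · rintro ⟨i, hmin, rfl⟩
    exact minwin_prefix hb hleast m i hmin
  · rintro rfl
    obtain ⟨i, hmin⟩ := exists_minwin a (m+1)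
    exact ⟨i, hmin, (minwin_prefix hb hleast m i hmin).symm⟩

end Comb

section Package
variable {Δ : Type*} {k : ℕ}

lemma isKAutomatic_of_KRec [Fintype Δ] (hk : 2 ≤ k) (b : ℕ → Δ)
    (h : ∀ d : Δ, KRec k 1 (fun v => b (v 0) = d)) : IsKAutomatic k b := by
  classical
  choose Q hQ δ q0 F hF using h
  haveI : ∀ d, Finite (Q d) := hQ
  obtain ⟨n, ⟨e⟩⟩ := Finite.exists_equiv_fin (∀ d : Δ, Q d)
  refine ⟨n, fun s dg => e (fun d => δ d ((e.symm s) d) (fun _ => dg)), e (fun d => q0 d),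
    fun s => if hex : ∃ d, F d ((e.symm s) d) then hex.choose else b 0, fun m w hw => ?_⟩
  -- transport foldl through e
  have key : ∀ (w : List (Fin k)) (S : ∀ d : Δ, Q d),
      w.foldl (fun s dg => e (fun d => δ d ((e.symm s) d) (fun _ => dg))) (e S)
      = e (w.foldl (fun S dg => fun d => δ d (S d) (fun _ => dg)) S) := by
    intro w
    induction w with
    | nil => intro S; rfl
    | cons dg w ih =>
      intro S
      simp only [List.foldl_cons, Equiv.symm_apply_apply]
      exact ih _
  rw [key]
  simp only [Equiv.symm_apply_apply]
  -- componentwise foldl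
  have comp : ∀ (w : List (Fin k)) (S : ∀ d : Δ, Q d) (d : Δ),
      (w.foldl (fun S dg => fun d => δ d (S d) (fun _ => dg)) S) d
      = (w.map (fun dg => (fun _ => dg : Fin 1 → Fin k))).foldl (δ d) (S d) := by
    intro w
    induction w with
    | nil => intro S d; rfl
    | cons dg w ih =>
      intro S d
      simp only [List.foldl_cons, List.map_cons]
      exact ih _ _
  have hrep : ∀ (d : Δ) (x : Fin 1), Nat.ofDigits k
      (((w.map (fun dg => (fun _ => dg : Fin 1 → Fin k)))).map fun c => ((c x).val)) = m := by
    intro d x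
    rw [List.map_map]
    exact hw
  have hFd : ∀ d : Δ, F d ((w.foldl (fun S dg => fun d => δ d (S d) (fun _ => dg))
      (fun d => q0 d)) d) ↔ b m = d := by
    intro d
    rw [comp]
    exact hF d (fun _ => m) _ (hrep d)
  have hex : ∃ d, F d ((w.foldl (fun S dg => fun d => δ d (S d) (fun _ => dg))
      (fun d => q0 d)) d) := ⟨b m, (hFd (b m)).mpr rfl⟩
  rw [dif_pos hex]
  exact (hFd _).mp hex.choose_spec

end Package

section Main
variable {Δ : Type*} [Fintype Δ] [LinearOrder Δ]

theorem lexLeast_orbitClosure_automatic' (k : ℕ) (hk : 2 ≤ k) (a b : ℕ → Δ)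
    (ha : IsKAutomatic k a) (hb : InOrbitClosure a b)
    (hleast : ∀ c : ℕ → Δ, InOrbitClosure a c → SeqLexLe b c) :
    IsKAutomatic k b := by
  classical
  obtain ⟨na, δa, qa0, τa, haut⟩ := ha
  have haut' : ∀ (m : ℕ) (u : List (Fin k)),
      Nat.ofDigits k (u.map Fin.val) = m → a m = τa (u.foldl δa qa0) := haut
  apply isKAutomatic_of_KRec hk
  intro d
  -- atoms
  have atomEq : KRec k 4 (fun v => a (v 0 + v 1) = a (v 2 + v 3)) :=
    KRec.aAtom hk a δa qa0 τa haut' (fun u v => u = v)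
  have atomLt : KRec k 4 (fun v => a (v 0 + v 1) < a (v 2 + v 3)) :=
    KRec.aAtom hk a δa qa0 τa haut' (fun u v => u < v)
  have atomD : KRec k 4 (fun v => a (v 0 + v 1) = d) :=
    KRec.aAtom hk a δa qa0 τa haut' (fun u _ => u = d)
  -- R1 over (j, i, s) : a (j+s) = a (i+s)
  have hR1 : KRec k 3 (fun v => a (v 0 + v 2) = a (v 1 + v 2)) :=
    atomEq.comp ![0, 2, 1, 2]
  -- inner over (s, j, i, t) : s < t ∧ ¬ a (j+s) = a (i+s)
  have part1 : KRec k 4 (fun v => v 0 < v 3) := (KRec.lt hk).comp ![0, 3]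
  have part2 : KRec k 4 (fun v => ¬ a (v 1 + v 0) = a (v 2 + v 0)) :=
    hR1.not.comp ![1, 2, 0]
  -- R2' over (j, i, t) : ∃ s, s < t ∧ ¬ a (j+s) = a (i+s)
  have hR2 : KRec k 3 (fun v => ∃ s : ℕ, s < v 2 ∧ ¬ a (v 0 + s) = a (v 1 + s)) := by
    have h := (part1.and part2).exists hk
    refine h.congr (fun v => ?_)
    constructor
    · rintro ⟨x, h1, h2⟩
      exact ⟨x, by simpa [Fin.cons, Fin.cases, Fin.induction, Fin.induction.go] using h1, by simpa [Fin.cons, Fin.cases, Fin.induction, Fin.induction.go] using h2⟩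
    · rintro ⟨x, h1, h2⟩
      refine ⟨x, ?_, ?_⟩
      · simpa [Fin.cons, Fin.cases, Fin.induction, Fin.induction.go] using h1
      · simpa [Fin.cons, Fin.cases, Fin.induction, Fin.induction.go] using h2
  -- R3 over (j, i, t) : a (j+t) < a (i+t)
  have hR3 : KRec k 3 (fun v => a (v 0 + v 2) < a (v 1 + v 2)) :=
    atomLt.comp ![0, 2, 1, 2]
  -- core over (t, j, i, m) : t ≤ m ∧ (∀ s < t, a (j+s) = a (i+s)) ∧ a (j+t) < a (i+t)
  have hLe : KRec k 4 (fun v => ¬ (v 3 < v 0)) := ((KRec.lt hk).comp ![3, 0]).not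
  have hR2' : KRec k 4 (fun v => ¬ ∃ s : ℕ, s < v 0 ∧ ¬ a (v 1 + s) = a (v 2 + s)) :=
    hR2.not.comp ![1, 2, 0]
  have hR3' : KRec k 4 (fun v => a (v 1 + v 0) < a (v 2 + v 0)) :=
    hR3.comp ![1, 2, 0]
  -- R4 over (j, i, m) : WinLt a j i (m+1)
  have hR4 : KRec k 3 (fun v => WinLt a (v 0) (v 1) (v 2 + 1)) := by
    have h := (hLe.and (hR2'.and hR3')).exists hk
    refine h.congr (fun v => ?_)
    constructor
    · rintro ⟨t, h1, h2, h3⟩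
      refine ⟨t, ?_, ?_, ?_⟩
      · have : ¬ (v 2 < t) := by simpa [Fin.cons, Fin.cases, Fin.induction, Fin.induction.go] using h1
        omega
      · intro s hs
        by_contra hne
        exact (by simpa [Fin.cons, Fin.cases, Fin.induction, Fin.induction.go] using h2 : ¬ ∃ s, s < t ∧ ¬ a (v 0 + s) = a (v 1 + s))
          ⟨s, hs, hne⟩
      · simpa [Fin.cons, Fin.cases, Fin.induction, Fin.induction.go] using h3
    · rintro ⟨t, h1, h2, h3⟩
      refine ⟨t, ?_, ?_, ?_⟩
      · have hn : ¬ (v 2 < t) := by omega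
        simpa [Fin.cons, Fin.cases, Fin.induction, Fin.induction.go] using hn
      · have hn : ¬ ∃ s, s < t ∧ ¬ a (v 0 + s) = a (v 1 + s) := by
          rintro ⟨s, hs, hne⟩
          exact hne (h2 s hs)
        simpa [Fin.cons, Fin.cases, Fin.induction, Fin.induction.go] using hn
      · simpa [Fin.cons, Fin.cases, Fin.induction, Fin.induction.go] using h3
  -- R5 over (i, m) : MinWin a i (m+1)
  have hR5 : KRec k 2 (fun v => MinWin a (v 0) (v 1 + 1)) := by
    have h := (hR4.exists hk).not
    refine h.congr (fun v => ?_)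
    constructor
    · intro hne j hwin
      refine hne ⟨j, ?_⟩
      simpa [Fin.cons, Fin.cases, Fin.induction, Fin.induction.go] using hwin
    · rintro hmin ⟨j, hwin⟩
      exact hmin j (by simpa [Fin.cons, Fin.cases, Fin.induction, Fin.induction.go] using hwin)
  have hAd : KRec k 2 (fun v => a (v 0 + v 1) = d) := atomD.comp ![0, 1, 0, 1]
  have hR6 : KRec k 1 (fun v => b (v 0) = d) := by
    have h := (hR5.and hAd).exists hk
    refine h.congr (fun v => ?_)
    rw [← bval_iff hb hleast (v 0) d]
    constructor
    · rintro ⟨i, h1, h2⟩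
      exact ⟨i, by simpa [Fin.cons, Fin.cases, Fin.induction, Fin.induction.go] using h1, by simpa [Fin.cons, Fin.cases, Fin.induction, Fin.induction.go] using h2⟩
    · rintro ⟨i, h1, h2⟩
      exact ⟨i, by simpa [Fin.cons, Fin.cases, Fin.induction, Fin.induction.go] using h1, by simpa [Fin.cons, Fin.cases, Fin.induction, Fin.induction.go] using h2⟩
  exact hR6

end Main

end
end LexAuto

/-- If `a` is `k`-automatic, then the lexicographically least sequence `b` in
the orbit closure of `a` is also `k`-automatic. -/
theorem lexLeast_orbitClosure_automatic {Δ : Type*} [Fintype Δ] [LinearOrder Δ]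
    (k : ℕ) (hk : 2 ≤ k) (a b : ℕ → Δ) (ha : IsKAutomatic k a)
    (hb : InOrbitClosure a b)
    (hleast : ∀ c : ℕ → Δ, InOrbitClosure a c → SeqLexLe b c) :
    IsKAutomatic k b := by
  exact LexAuto.lexLeast_orbitClosure_automatic' k hk a b ha hb hleast
end

section
/- Let k ≥ 2 and let a = (a_n)_{n≥0} be a k-automatic sequence over a finite totally ordered alphabet. Then the lexicographically least sequence in the reverse orbit closure of a is k-automatic. -/
set_option linter.unusedSectionVars false
set_option maxHeartbeats 1000000



/-- `b` lies in the reverse orbit closure of `a`: every finite prefix of `b`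
is a prefix of some word `a_r a_{r-1} ⋯ a_1 a_0`. -/
def InRevOrbitClosure {Δ : Type*} (a b : ℕ → Δ) : Prop :=
  ∀ n : ℕ, ∃ r : ℕ, n ≤ r + 1 ∧ ∀ m : ℕ, m < n → b m = a (r - m)

namespace RevLexAux

instance : Fintype Ordering := ⟨{.lt, .eq, .gt}, by intro x; cases x <;> decide⟩

variable {Δ : Type*} [LinearOrder Δ] [Fintype Δ]
variable {K N : ℕ}

section Defs
variable (δf : Fin N → Fin K → Fin N)

def step (e : Fin K) (d : ℕ) (s : Fin N × Bool) : Fin N × Bool :=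
  if h : d + (if s.2 then 1 else 0) ≤ e.val then
    (δf s.1 ⟨e.val - (d + (if s.2 then 1 else 0)), by have := e.isLt; omega⟩, false)
  else
    (δf s.1 ⟨K + e.val - (d + (if s.2 then 1 else 0)), by have := e.isLt; omega⟩, true)

def simNat : List (Fin K) → ℕ → Fin N × Bool → Fin N × Bool
  | [], _, s => s
  | e :: u, m, s => simNat u (m / K) (step δf e (m % K) s)

def listPre (x : ℕ → Fin K) (P : ℕ) : List (Fin K) := (List.range P).map x

def valF (u : List (Fin K)) : ℕ := Nat.ofDigits K (u.map Fin.val)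

variable (q0 : Fin N)

def sim (x : ℕ → Fin K) (m P : ℕ) : Fin N × Bool := simNat δf (listPre x P) m (q0, false)

end Defs

section Basic
variable (δf : Fin N → Fin K → Fin N)

@[simp] lemma simNat_nil (m : ℕ) (s : Fin N × Bool) : simNat δf [] m s = s := rfl

lemma simNat_cons (e : Fin K) (u : List (Fin K)) (m : ℕ) (s : Fin N × Bool) :
    simNat δf (e :: u) m s = simNat δf u (m / K) (step δf e (m % K) s) := rfl

lemma valF_cons (e : Fin K) (u : List (Fin K)) : valF (e :: u) = e.val + K * valF u := by
  simp [valF, Nat.ofDigits_cons]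

@[simp] lemma valF_nil : valF (K := K) [] = 0 := by simp [valF, Nat.ofDigits]

lemma valF_lt (u : List (Fin K)) : valF u < K ^ u.length := by
  induction u with
  | nil => simp
  | cons e u ih =>
    rw [valF_cons]
    have he := e.isLt
    have h1 : K * (valF u + 1) ≤ K * K ^ u.length := Nat.mul_le_mul_left K ih
    rw [Nat.mul_succ] at h1
    rw [List.length_cons, pow_succ]
    have h2 : K ^ u.length * K = K * K ^ u.length := Nat.mul_comm _ _
    omega

lemma valF_append (u w : List (Fin K)) :
    valF (u ++ w) = valF u + K ^ u.length * valF w := by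
  simp [valF, Nat.ofDigits_append]

lemma simNat_sub (u : List (Fin K)) : ∀ (m : ℕ) (s : Fin N × Bool),
    m + (if s.2 then 1 else 0) ≤ valF u →
    ∃ y : List (Fin K), y.length = u.length ∧
      valF y + (m + (if s.2 then 1 else 0)) = valF u ∧
      simNat δf u m s = (y.foldl δf s.1, false) := by
  induction u with
  | nil =>
    intro m s h
    have hs2 : s.2 = false := by
      by_contra hs
      rw [Bool.not_eq_false] at hs
      rw [hs] at h
      simp at h
    rw [hs2] at h ⊢
    simp only [valF_nil, Nat.le_zero, if_neg Bool.false_ne_true, Nat.add_zero] at h ⊢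
    refine ⟨[], rfl, by simp; omega, ?_⟩
    obtain ⟨s1, s2⟩ := s
    simp only at hs2
    subst hs2
    rfl
  | cons e u ih =>
    intro m s h
    have hK : 0 < K := e.pos
    have hdm : K * (m / K) + m % K = m := Nat.div_add_mod m K
    have hd : m % K < K := Nat.mod_lt _ hK
    have he := e.isLt
    rw [valF_cons] at h
    have hB : (if s.2 then 1 else 0) = 0 ∨ (if s.2 then 1 else 0) = 1 := by
      cases s.2 <;> simp
    by_cases hb : m % K + (if s.2 then 1 else 0) ≤ e.val
    · have hstep : step δf e (m % K) s =
          (δf s.1 ⟨e.val - (m % K + (if s.2 then 1 else 0)), by omega⟩, false) := by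
        rw [step, dif_pos hb]
      have hq : m / K ≤ valF u := by
        by_contra hqq
        push_neg at hqq
        have h1 : K * (valF u + 1) ≤ K * (m / K) := Nat.mul_le_mul_left K hqq
        rw [Nat.mul_succ] at h1
        rcases hB with hB | hB <;> omega
      obtain ⟨y, hy1, hy2, hy3⟩ := ih (m / K)
        (δf s.1 ⟨e.val - (m % K + (if s.2 then 1 else 0)), by omega⟩, false)
        (by simpa using hq)
      simp only [if_neg Bool.false_ne_true, Nat.add_zero] at hy2
      refine ⟨⟨e.val - (m % K + (if s.2 then 1 else 0)), by omega⟩ :: y, by simp [hy1], ?_, ?_⟩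
      · rw [valF_cons, valF_cons]
        have h1 : K * (valF y + m / K) = K * valF u := by rw [hy2]
        rw [Nat.mul_add] at h1
        simp only
        rcases hB with hB | hB <;> omega
      · rw [simNat_cons, hstep, hy3]
        rfl
    · have hstep : step δf e (m % K) s =
          (δf s.1 ⟨K + e.val - (m % K + (if s.2 then 1 else 0)), by omega⟩, true) := by
        rw [step, dif_neg hb]
      have hq : m / K + 1 ≤ valF u := by
        by_contra hqq
        push_neg at hqq
        have hqq' : valF u ≤ m / K := by omega
        have h1 : K * valF u ≤ K * (m / K) := Nat.mul_le_mul_left K hqq'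
        rcases hB with hB | hB <;> omega
      obtain ⟨y, hy1, hy2, hy3⟩ := ih (m / K)
        (δf s.1 ⟨K + e.val - (m % K + (if s.2 then 1 else 0)), by omega⟩, true)
        (by simpa using hq)
      simp at hy2
      refine ⟨⟨K + e.val - (m % K + (if s.2 then 1 else 0)), by omega⟩ :: y,
        by simp [hy1], ?_, ?_⟩
      · rw [valF_cons, valF_cons]
        have h1 : K * (valF y + (m / K + 1)) = K * valF u := by rw [hy2]
        rw [Nat.mul_add, Nat.mul_add, Nat.mul_one] at h1
        simp only
        rcases hB with hB | hB <;> omega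
      · rw [simNat_cons, hstep, hy3]
        rfl

lemma simNat_no_borrow (u : List (Fin K)) : ∀ (m : ℕ) (s : Fin N × Bool),
    m < K ^ u.length → (simNat δf u m s).2 = false →
    m + (if s.2 then 1 else 0) ≤ valF u := by
  induction u with
  | nil =>
    intro m s hm hb
    simp only [List.length_nil, pow_zero, Nat.lt_one_iff] at hm
    subst hm
    simp only [simNat] at hb
    rw [hb]
    simp
  | cons e u ih =>
    intro m s hm hb
    have hK : 0 < K := e.pos
    have hdm : K * (m / K) + m % K = m := Nat.div_add_mod m K
    have hd : m % K < K := Nat.mod_lt _ hK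
    have he := e.isLt
    have hB : (if s.2 then 1 else 0) = 0 ∨ (if s.2 then 1 else 0) = 1 := by
      cases s.2 <;> simp
    have hq : m / K < K ^ u.length := by
      rw [List.length_cons, pow_succ] at hm
      exact (Nat.div_lt_iff_lt_mul hK).mpr hm
    rw [valF_cons]
    rw [simNat_cons] at hb
    by_cases hbb : m % K + (if s.2 then 1 else 0) ≤ e.val
    · have hstep : step δf e (m % K) s =
          (δf s.1 ⟨e.val - (m % K + (if s.2 then 1 else 0)), by omega⟩, false) := by
        rw [step, dif_pos hbb]
      rw [hstep] at hb
      have hih := ih (m / K) _ hq hb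
      simp only [if_neg Bool.false_ne_true, Nat.add_zero] at hih
      have h1 : K * (m / K) ≤ K * valF u := Nat.mul_le_mul_left K hih
      rcases hB with hB | hB <;> omega
    · have hstep : step δf e (m % K) s =
          (δf s.1 ⟨K + e.val - (m % K + (if s.2 then 1 else 0)), by omega⟩, true) := by
        rw [step, dif_neg hbb]
      rw [hstep] at hb
      have hih := ih (m / K) _ hq hb
      simp at hih
      have h1 : K * (m / K + 1) ≤ K * valF u := Nat.mul_le_mul_left K hih
      rw [Nat.mul_succ] at h1
      rcases hB with hB | hB <;> omega

end Basic

-- Ordering helpers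
lemma then_eq_iff (o o' : Ordering) : o.then o' = .eq ↔ o = .eq ∧ o' = .eq := by
  cases o <;> cases o' <;> simp [Ordering.then]

lemma then_assoc (o o' o'' : Ordering) : (o.then o').then o'' = o.then (o'.then o'') := by
  cases o <;> cases o' <;> cases o'' <;> rfl

lemma then_swap (o o' : Ordering) : (o.then o').swap = o.swap.then o'.swap := by
  cases o <;> cases o' <;> rfl

lemma compare_swap' {α : Type*} [LinearOrder α] (a b : α) :
    compare a b = (compare b a).swap := by
  rcases lt_trichotomy a b with h | h | h
  · rw [compare_lt_iff_lt.mpr h, compare_gt_iff_gt.mpr h]; rfl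
  · subst h
    rw [compare_eq_iff_eq.mpr rfl]; rfl
  · rw [compare_gt_iff_gt.mpr h, compare_lt_iff_lt.mpr h]; rfl

def cmpSeq : ℕ → (ℕ → Δ) → (ℕ → Δ) → Ordering
  | 0, _, _ => .eq
  | n + 1, f, g => (cmpSeq n f g).then (compare (f n) (g n))

lemma cmpSeq_eq_iff (n : ℕ) (f g : ℕ → Δ) :
    cmpSeq n f g = .eq ↔ ∀ m < n, f m = g m := by
  induction n with
  | zero => simp [cmpSeq]
  | succ n ih =>
    rw [cmpSeq, then_eq_iff, ih, compare_eq_iff_eq]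
    constructor
    · rintro ⟨h1, h2⟩ m hm
      rcases Nat.lt_or_ge m n with h | h
      · exact h1 m h
      · have : m = n := by omega
        subst this; exact h2
    · intro h
      exact ⟨fun m hm => h m (by omega), h n (by omega)⟩

lemma cmpSeq_lt_iff (n : ℕ) (f g : ℕ → Δ) :
    cmpSeq n f g = .lt ↔ ∃ m0 < n, (∀ m < m0, f m = g m) ∧ f m0 < g m0 := by
  induction n with
  | zero => simp [cmpSeq]
  | succ n ih =>
    rw [cmpSeq]
    rcases ho : cmpSeq n f g with _ | _ | _
    · simp only [Ordering.then]
      constructor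
      · intro _
        obtain ⟨m0, hm0, h1, h2⟩ := ih.mp ho
        exact ⟨m0, by omega, h1, h2⟩
      · intro _; trivial
    · simp only [Ordering.then]
      rw [compare_lt_iff_lt]
      have hpre := (cmpSeq_eq_iff n f g).mp ho
      constructor
      · intro h
        exact ⟨n, by omega, hpre, h⟩
      · rintro ⟨m0, hm0, h1, h2⟩
        rcases Nat.lt_or_ge m0 n with h | h
        · exact absurd (hpre m0 h) (ne_of_lt h2)
        · have : m0 = n := by omega
          subst this; exact h2
    · simp only [Ordering.then]
      constructor
      · intro h; exact absurd h (by decide)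
      · rintro ⟨m0, hm0, h1, h2⟩
        rcases Nat.lt_or_ge m0 n with h | h
        · rw [ih.mpr ⟨m0, h, h1, h2⟩] at ho; exact absurd ho (by decide)
        · have : m0 = n := by omega
          subst this
          rw [(cmpSeq_eq_iff _ f g).mpr h1] at ho
          exact absurd ho (by decide)

lemma cmpSeq_swap (n : ℕ) (f g : ℕ → Δ) : cmpSeq n g f = (cmpSeq n f g).swap := by
  induction n with
  | zero => rfl
  | succ n ih => rw [cmpSeq, cmpSeq, then_swap, ih, compare_swap']

lemma cmpSeq_congr (n : ℕ) {f g f' g' : ℕ → Δ} (hf : ∀ m < n, f m = f' m)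
    (hg : ∀ m < n, g m = g' m) : cmpSeq n f g = cmpSeq n f' g' := by
  induction n with
  | zero => rfl
  | succ n ih =>
    rw [cmpSeq, cmpSeq, ih (fun m hm => hf m (by omega)) (fun m hm => hg m (by omega)),
      hf n (by omega), hg n (by omega)]

lemma cmpSeq_add (m n : ℕ) (f g : ℕ → Δ) :
    cmpSeq (m + n) f g =
      (cmpSeq m f g).then (cmpSeq n (fun i => f (m + i)) (fun i => g (m + i))) := by
  induction n with
  | zero => simp [cmpSeq, Ordering.then]; cases cmpSeq m f g <;> rfl
  | succ n ih =>
    show cmpSeq (m + n + 1) f g = _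
    rw [cmpSeq, ih, cmpSeq, then_assoc]

def ordFold : ℕ → (ℕ → Ordering) → Ordering
  | 0, _ => .eq
  | n + 1, F => (ordFold n F).then (F n)

lemma ordFold_congr (n : ℕ) {F G : ℕ → Ordering} (h : ∀ m < n, F m = G m) :
    ordFold n F = ordFold n G := by
  induction n with
  | zero => rfl
  | succ n ih => rw [ordFold, ordFold, ih (fun m hm => h m (by omega)), h n (by omega)]

lemma ordFold_eq_iff (n : ℕ) (F : ℕ → Ordering) :
    ordFold n F = .eq ↔ ∀ m < n, F m = .eq := by
  induction n with
  | zero => simp [ordFold]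
  | succ n ih =>
    rw [ordFold, then_eq_iff, ih]
    constructor
    · rintro ⟨h1, h2⟩ m hm
      rcases Nat.lt_or_ge m n with h | h
      · exact h1 m h
      · have : m = n := by omega
        subst this; exact h2
    · intro h
      exact ⟨fun m hm => h m (by omega), h n (by omega)⟩

lemma cmpSeq_mul (B T : ℕ) (f g : ℕ → Δ) :
    cmpSeq (B * T) f g =
      ordFold T (fun t => cmpSeq B (fun i => f (B * t + i)) (fun i => g (B * t + i))) := by
  induction T with
  | zero => simp [cmpSeq, ordFold]
  | succ T ih =>
    rw [Nat.mul_succ, cmpSeq_add, ih, ordFold]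


section Struct
variable (δf : Fin N → Fin K → Fin N) (q0 : Fin N)

lemma simNat_append (u w : List (Fin K)) (m : ℕ) (s : Fin N × Bool) :
    simNat δf (u ++ w) m s = simNat δf w (m / K ^ u.length) (simNat δf u m s) := by
  induction u generalizing m s with
  | nil => simp
  | cons e u ih =>
    rw [List.cons_append, simNat_cons, ih, simNat_cons]
    have hdd : m / K / K ^ u.length = m / K ^ (e :: u).length := by
      rw [Nat.div_div_eq_div_mul, List.length_cons, pow_succ, Nat.mul_comm]
    rw [hdd]

lemma simNat_mod (u : List (Fin K)) (m : ℕ) (s : Fin N × Bool) :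
    simNat δf u m s = simNat δf u (m % K ^ u.length) s := by
  induction u generalizing m s with
  | nil => simp
  | cons e u ih =>
    have key : K ^ (e :: u).length = K * K ^ u.length := by
      rw [List.length_cons, pow_succ, Nat.mul_comm]
    have h1 : m % K ^ (e :: u).length % K = m % K := by
      rw [key]; exact Nat.mod_mod_of_dvd m (dvd_mul_right K (K ^ u.length))
    have h2 : m % K ^ (e :: u).length / K = m / K % K ^ u.length := by
      rw [key]; exact Nat.mod_mul_right_div_self m K (K ^ u.length)
    rw [simNat_cons, simNat_cons, h1, h2]
    exact ih _ _

@[simp] lemma listPre_length (x : ℕ → Fin K) (P : ℕ) : (listPre x P).length = P := by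
  simp [listPre]

lemma listPre_succ (x : ℕ → Fin K) (P : ℕ) : listPre x (P + 1) = listPre x P ++ [x P] := by
  simp [listPre, List.range_succ]

lemma listPre_add (x : ℕ → Fin K) (P L : ℕ) :
    listPre x (P + L) = listPre x P ++ listPre (fun j => x (P + j)) L := by
  simp only [listPre, List.range_add, List.map_append, List.map_map]
  rfl

lemma listPre_congr {x y : ℕ → Fin K} (P : ℕ) (h : ∀ i < P, x i = y i) :
    listPre x P = listPre y P := by
  apply List.map_congr_left
  intro i hi
  exact h i (List.mem_range.mp hi)

lemma listPre_head (x : ℕ → Fin K) (L : ℕ) :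
    listPre x (L + 1) = x 0 :: listPre (fun j => x (j + 1)) L := by
  simp only [listPre, List.range_succ_eq_map, List.map_cons, List.map_map]
  rfl

lemma sim_congr {x y : ℕ → Fin K} {P : ℕ} (h : ∀ i < P, x i = y i) (m : ℕ) :
    sim δf q0 x m P = sim δf q0 y m P := by
  rw [sim, sim, listPre_congr P h]

lemma sim_split (x : ℕ → Fin K) (m P L : ℕ) :
    sim δf q0 x m (P + L) =
      simNat δf (listPre (fun j => x (P + j)) L) (m / K ^ P) (sim δf q0 x m P) := by
  rw [sim, listPre_add, simNat_append, listPre_length]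
  rfl

lemma sim_mod (x : ℕ → Fin K) (m P : ℕ) :
    sim δf q0 x m P = sim δf q0 x (m % K ^ P) P := by
  unfold sim
  rw [simNat_mod δf (listPre x P) m, listPre_length]

lemma sim_succ (hK : 0 < K) (x : ℕ → Fin K) (m P : ℕ) :
    sim δf q0 x m (P + 1) = step δf (x P) (m / K ^ P % K) (sim δf q0 x m P) := by
  rw [sim_split δf q0 x m P 1]
  have : listPre (fun j => x (P + j)) 1 = [x P] := by
    simp [listPre, List.range_succ]
  rw [this, simNat_cons, simNat_nil]

lemma sim_block (hK : 0 < K) (x : ℕ → Fin K) (m0 t P : ℕ) (hm : m0 < K ^ P) :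
    sim δf q0 x (K ^ P * t + m0) P = sim δf q0 x m0 P := by
  rw [sim_mod δf q0 x (K ^ P * t + m0) P, Nat.mul_add_mod, Nat.mod_eq_of_lt hm]

lemma sim_block_full (hK : 0 < K) (x : ℕ → Fin K) (m0 t P : ℕ) (hm : m0 < K ^ P)
    (ht : t < K) :
    sim δf q0 x (K ^ P * t + m0) (P + 1) = step δf (x P) t (sim δf q0 x m0 P) := by
  rw [sim_succ δf q0 hK]
  have h1 : (K ^ P * t + m0) / K ^ P = t := by
    rw [Nat.mul_add_div (pow_pos hK P), Nat.div_eq_of_lt hm, Nat.add_zero]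
  rw [h1, Nat.mod_eq_of_lt ht, sim_block δf q0 hK x m0 t P hm]

end Struct

section OA
variable (δf : Fin N → Fin K → Fin N) (q0 : Fin N) (τf : Fin N → Δ)

def OAt (x : ℕ → Fin K) (P : ℕ) (ψ ψ' : Fin N × Bool → Δ) : Ordering :=
  cmpSeq (K ^ P) (fun m => ψ (sim δf q0 x m P)) (fun m => ψ' (sim δf q0 x m P))

def AAt (x : ℕ → Fin K) (P : ℕ) : Finset (Fin N × Bool) :=
  (Finset.range (K ^ P)).image (fun m => sim δf q0 x m P)

lemma mem_AAt (x : ℕ → Fin K) (P m : ℕ) (hm : m < K ^ P) :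
    sim δf q0 x m P ∈ AAt δf q0 x P := by
  apply Finset.mem_image_of_mem
  exact Finset.mem_range.mpr hm

lemma OAt_congr {x y : ℕ → Fin K} {P : ℕ} (h : ∀ i < P, x i = y i) :
    OAt (Δ := Δ) δf q0 x P = OAt δf q0 y P := by
  funext ψ ψ'
  unfold OAt
  apply cmpSeq_congr <;> intro m _ <;> rw [sim_congr δf q0 h]

lemma AAt_congr {x y : ℕ → Fin K} {P : ℕ} (h : ∀ i < P, x i = y i) :
    AAt δf q0 x P = AAt δf q0 y P := by
  unfold AAt
  apply Finset.image_congr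
  intro m _
  exact sim_congr δf q0 h m

lemma OAt_eq_iff (x : ℕ → Fin K) (P : ℕ) (ψ ψ' : Fin N × Bool → Δ) :
    OAt δf q0 x P ψ ψ' = .eq ↔
      ∀ m < K ^ P, ψ (sim δf q0 x m P) = ψ' (sim δf q0 x m P) :=
  cmpSeq_eq_iff _ _ _

lemma OAt_refl (x : ℕ → Fin K) (P : ℕ) (ψ : Fin N × Bool → Δ) :
    OAt δf q0 x P ψ ψ = .eq := by
  rw [OAt_eq_iff]
  intro m _
  rfl

lemma OAt_eq_symm {x : ℕ → Fin K} {P : ℕ} {ψ ψ' : Fin N × Bool → Δ}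
    (h : OAt δf q0 x P ψ ψ' = .eq) : OAt δf q0 x P ψ' ψ = .eq := by
  rw [OAt_eq_iff] at h ⊢
  intro m hm
  exact (h m hm).symm

lemma OAt_eq_trans {x : ℕ → Fin K} {P : ℕ} {ψ ψ' ψ'' : Fin N × Bool → Δ}
    (h : OAt δf q0 x P ψ ψ' = .eq) (h' : OAt δf q0 x P ψ' ψ'' = .eq) :
    OAt δf q0 x P ψ ψ'' = .eq := by
  rw [OAt_eq_iff] at h h' ⊢
  intro m hm
  rw [h m hm, h' m hm]

lemma OAt_succ (hK : 0 < K) (x : ℕ → Fin K) (P : ℕ) :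
    OAt (Δ := Δ) δf q0 x (P + 1) = fun ψ ψ' =>
      ordFold K (fun d => OAt δf q0 x P (fun s => ψ (step δf (x P) d s))
        (fun s => ψ' (step δf (x P) d s))) := by
  funext ψ ψ'
  unfold OAt
  rw [pow_succ, cmpSeq_mul]
  apply ordFold_congr
  intro d hd
  apply cmpSeq_congr <;> intro i hi <;>
    rw [sim_block_full δf q0 hK x i d P hi hd]

lemma AAt_succ (hK : 0 < K) (x : ℕ → Fin K) (P : ℕ) :
    AAt δf q0 x (P + 1) =
      (AAt δf q0 x P).biUnion
        (fun s => (Finset.range K).image (fun d => step δf (x P) d s)) := by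
  ext s
  simp only [AAt, Finset.mem_image, Finset.mem_range, Finset.mem_biUnion]
  constructor
  · rintro ⟨m, hm, rfl⟩
    have hdiv : m / K ^ P < K := by
      rw [pow_succ] at hm
      exact (Nat.div_lt_iff_lt_mul (pow_pos hK P)).mpr (by rw [Nat.mul_comm]; exact hm)
    refine ⟨sim δf q0 x (m % K ^ P) P, ⟨m % K ^ P, Nat.mod_lt _ (pow_pos hK P), rfl⟩,
      m / K ^ P, hdiv, ?_⟩
    rw [sim_succ δf q0 hK, Nat.mod_eq_of_lt hdiv, sim_mod δf q0 x m P]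
  · rintro ⟨s0, ⟨m0, hm0, rfl⟩, d, hd, rfl⟩
    refine ⟨K ^ P * d + m0, ?_, ?_⟩
    · have h1 : K ^ P * (d + 1) ≤ K ^ P * K := Nat.mul_le_mul_left _ (by omega)
      rw [Nat.mul_succ] at h1
      rw [pow_succ]
      omega
    · exact sim_block_full δf q0 hK x m0 d P hm0 hd

def famAt (x : ℕ → Fin K) (φ : ℕ → (Fin N × Bool) → Δ) (P t : ℕ) :
    (Fin N × Bool) → Δ :=
  fun s => φ (P + (t + 1)) (simNat δf (listPre (fun j => x (P + j)) (t + 1)) t s)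

lemma famAt_eq_of {x x' : ℕ → Fin K} {φ φ' : ℕ → (Fin N × Bool) → Δ} {P P' : ℕ} (t : ℕ)
    (hx : ∀ j ≤ t, x (P + j) = x' (P' + j)) (hφ : φ (P + (t + 1)) = φ' (P' + (t + 1))) :
    famAt δf x φ P t = famAt δf x' φ' P' t := by
  funext s
  unfold famAt
  rw [hφ, listPre_congr (t + 1) (fun j hj => hx j (by omega))]

/-- `R1`: consistency of the output-function chain. -/
def R1 (x : ℕ → Fin K) (φ : ℕ → (Fin N × Bool) → Δ) : Prop :=
  ∀ P s, φ P s = φ (P + 1) (step δf (x P) 0 s)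

/-- `R2`: realizability. -/
def R2 (x : ℕ → Fin K) (φ : ℕ → (Fin N × Bool) → Δ) : Prop :=
  ∀ P, ∃ w : List (Fin K), ∀ s ∈ AAt δf q0 x P,
    (simNat δf w 0 s).2 = false ∧ φ P s = τf ((simNat δf w 0 s).1)

/-- `R3`: the output values. -/
def R3 (x : ℕ → Fin K) (φ : ℕ → (Fin N × Bool) → Δ) (c : ℕ → Δ) : Prop :=
  ∀ P m, m < K ^ P → c m = φ P (sim δf q0 x m P)

lemma r1_lift (hK : 0 < K) {x : ℕ → Fin K} {φ : ℕ → (Fin N × Bool) → Δ}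
    (h1 : R1 δf x φ) (P Q m : ℕ) (hm : m < K ^ P) (hPQ : P ≤ Q) :
    φ P (sim δf q0 x m P) = φ Q (sim δf q0 x m Q) := by
  induction Q, hPQ using Nat.le_induction with
  | base => rfl
  | succ Q hQ ih =>
    rw [ih]
    have hmQ : m < K ^ Q := lt_of_lt_of_le hm (Nat.pow_le_pow_right hK hQ)
    have : sim δf q0 x m (Q + 1) = step δf (x Q) 0 (sim δf q0 x m Q) := by
      rw [sim_succ δf q0 hK, Nat.div_eq_of_lt hmQ, Nat.zero_mod]
    rw [this]
    exact h1 Q _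

lemma r1_r3 (hK1 : 1 < K) {x : ℕ → Fin K} {φ : ℕ → (Fin N × Bool) → Δ}
    (h1 : R1 δf x φ) : R3 δf q0 x φ (fun m => φ (m + 1) (sim δf q0 x m (m + 1))) := by
  have hK : 0 < K := by omega
  intro P m hm
  have hm1 : m < K ^ (m + 1) := by
    calc m < K ^ m := Nat.lt_pow_self (n := m) hK1
    _ ≤ K ^ (m + 1) := Nat.pow_le_pow_right hK (by omega)
  rcases Nat.le_total P (m + 1) with h | h
  · exact (r1_lift δf q0 hK h1 P (m + 1) m hm h).symm
  · exact r1_lift δf q0 hK h1 (m + 1) P m hm1 h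

lemma out_formula (hK : 1 < K) {x : ℕ → Fin K} {φ : ℕ → (Fin N × Bool) → Δ} {c : ℕ → Δ}
    (h3 : R3 δf q0 x φ c) (P m : ℕ) :
    c m = famAt δf x φ P (m / K ^ P) (sim δf q0 x (m % K ^ P) P) := by
  have hK0 : 0 < K := by omega
  have hmod := Nat.div_add_mod m (K ^ P)
  have hmlt : m % K ^ P < K ^ P := Nat.mod_lt _ (pow_pos hK0 P)
  have ht1 : m / K ^ P + 1 ≤ K ^ (m / K ^ P + 1) := le_of_lt (Nat.lt_pow_self hK)
  have h1 : m < K ^ (P + (m / K ^ P + 1)) := by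
    have h2 : K ^ P * (m / K ^ P + 1) ≤ K ^ P * K ^ (m / K ^ P + 1) :=
      Nat.mul_le_mul_left _ ht1
    rw [pow_add]
    rw [Nat.mul_succ] at h2
    omega
  rw [h3 (P + (m / K ^ P + 1)) m h1, sim_split δf q0 x m P (m / K ^ P + 1)]
  unfold famAt
  rw [sim_mod δf q0 x m P]

end OA

section Closure
variable (δf : Fin N → Fin K → Fin N) (q0 : Fin N) (τf : Fin N → Δ)

lemma rep_closure (hK : 1 < K) (a : ℕ → Δ)
    (H : ∀ (m : ℕ) (w : List (Fin K)),
      Nat.ofDigits K (w.map Fin.val) = m → a m = τf (w.foldl δf q0))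
    {x : ℕ → Fin K} {φ : ℕ → (Fin N × Bool) → Δ} {c : ℕ → Δ}
    (h2 : R2 δf q0 τf x φ) (h3 : R3 δf q0 x φ c) :
    InRevOrbitClosure a c := by
  intro n
  rcases Nat.eq_zero_or_pos n with hn | hn
  · exact ⟨0, by omega, fun m hm => absurd hm (by omega)⟩
  obtain ⟨w, hw⟩ := h2 n
  have hnK : n < K ^ n := Nat.lt_pow_self (n := n) hK
  have hsplit : ∀ m, m < K ^ n →
      simNat δf (listPre x n ++ w) m (q0, false) = simNat δf w 0 (sim δf q0 x m n) := by
    intro m hm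
    rw [simNat_append, listPre_length, Nat.div_eq_of_lt hm]
    rfl
  have hborrow : ∀ m, m < n → m ≤ valF (listPre x n ++ w) := by
    intro m hm
    have hmK : m < K ^ n := by omega
    have hb := (hw (sim δf q0 x m n) (mem_AAt δf q0 x n m hmK)).1
    have hb2 : (simNat δf (listPre x n ++ w) m (q0, false)).2 = false := by
      rw [hsplit m hmK]; exact hb
    have hlen2 : m < K ^ (listPre x n ++ w).length := by
      apply lt_of_lt_of_le hmK
      apply Nat.pow_le_pow_right (by omega)
      simp
    have := simNat_no_borrow δf (listPre x n ++ w) m (q0, false) hlen2 hb2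
    simpa using this
  refine ⟨valF (listPre x n ++ w), ?_, ?_⟩
  · have := hborrow (n - 1) (by omega)
    omega
  · intro m hm
    have hmK : m < K ^ n := by omega
    obtain ⟨y, hy1, hy2, hy3⟩ := simNat_sub δf (listPre x n ++ w) m (q0, false)
      (by simpa using hborrow m hm)
    simp only [if_neg Bool.false_ne_true, Nat.add_zero] at hy2
    have hval : Nat.ofDigits K (y.map Fin.val) = valF (listPre x n ++ w) - m := by
      show valF y = _
      omega
    rw [h3 n m hmK, (hw _ (mem_AAt δf q0 x n m hmK)).2,
      H (valF (listPre x n ++ w) - m) y hval]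
    have heq : simNat δf w 0 (sim δf q0 x m n) = (y.foldl δf q0, false) := by
      rw [← hsplit m hmK]; exact hy3
    rw [heq]

end Closure

section Extract
variable (δf : Fin N → Fin K → Fin N) (q0 : Fin N) (τf : Fin N → Δ)

lemma ulim {α : Type*} [Fintype α] (U : Ultrafilter ℕ) (f : ℕ → α) :
    ∃ v, {n | f n = v} ∈ U := by
  by_contra h
  push_neg at h
  have h2 : ∀ v : α, {n | f n = v}ᶜ ∈ U := fun v =>
    Ultrafilter.compl_mem_iff_notMem.mpr (h v)
  have h3 : ⋂ v ∈ (Finset.univ : Finset α), {n | f n = v}ᶜ ∈ (U : Filter ℕ) :=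
    (Filter.biInter_finset_mem _).mpr (fun v _ => h2 v)
  obtain ⟨n, hn⟩ := Filter.nonempty_of_mem h3
  simp only [Set.mem_iInter, Set.mem_compl_iff, Set.mem_setOf_eq] at hn
  exact hn (f n) (Finset.mem_univ _) rfl

def digF (hK : 1 < K) (r : ℕ) (i : ℕ) : Fin K :=
  ⟨(Nat.digits K r).getD i 0, by
    rcases Nat.lt_or_ge i (Nat.digits K r).length with h | h
    · rw [List.getD_eq_getElem _ _ h]
      exact Nat.digits_lt_base hK (List.getElem_mem _)
    · rw [List.getD_eq_default _ _ h]
      omega⟩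

lemma rangeMap_getD (l : List ℕ) (L : ℕ) (h : l.length ≤ L) :
    (List.range L).map (fun i => l.getD i 0) = l ++ List.replicate (L - l.length) 0 := by
  apply List.ext_getElem
  · simp
    omega
  · intro i h1 h2
    simp only [List.getElem_map, List.getElem_range]
    rcases Nat.lt_or_ge i l.length with hi | hi
    · rw [List.getD_eq_getElem _ _ hi, List.getElem_append_left hi]
    · rw [List.getD_eq_default _ _ hi, List.getElem_append_right hi, List.getElem_replicate]

lemma ofDigits_replicate_zero (j : ℕ) : Nat.ofDigits K (List.replicate j 0) = 0 := by
  induction j with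
  | zero => simp
  | succ j ih =>
    rw [List.replicate_succ, Nat.ofDigits_cons, ih]
    simp

lemma valF_digF (hK : 1 < K) (r L : ℕ) (h : (Nat.digits K r).length ≤ L) :
    valF (listPre (digF hK r) L) = r := by
  unfold valF
  have hmap : (listPre (digF hK r) L).map Fin.val
      = (List.range L).map (fun i => (Nat.digits K r).getD i 0) := by
    simp only [listPre, List.map_map]
    rfl
  rw [hmap, rangeMap_getD _ _ h, Nat.ofDigits_append, ofDigits_replicate_zero,
    Nat.ofDigits_digits]
  simp

lemma exists_rep (hK : 1 < K) (a b : ℕ → Δ)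
    (H : ∀ (m : ℕ) (w : List (Fin K)),
      Nat.ofDigits K (w.map Fin.val) = m → a m = τf (w.foldl δf q0))
    (hb : InRevOrbitClosure a b) :
    ∃ (x : ℕ → Fin K) (φ : ℕ → (Fin N × Bool) → Δ),
      R1 δf x φ ∧ R2 δf q0 τf x φ ∧ R3 δf q0 x φ b := by
  have hK0 : 0 < K := by omega
  choose r hr1 hr2 using hb
  set U := Filter.hyperfilter ℕ with hU
  set X : ℕ → ℕ → Fin K := fun n => digF hK (r n) with hX
  set L : ℕ → ℕ := fun n => (Nat.digits K (r n)).length with hL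
  set g : ℕ → ℕ → (Fin N × Bool) → (Fin N × Bool) :=
    fun n P => simNat δf (listPre (fun j => X n (P + j)) (L n - P)) 0 with hg
  -- the full digit list of r n and its value
  have hval : ∀ n, valF (listPre (X n) (L n)) = r n := fun n => valF_digF hK (r n) (L n) le_rfl
  -- membership of cofinite sets
  have hcof : ∀ c : ℕ, {n : ℕ | c ≤ n} ∈ U := by
    intro c
    have : {n : ℕ | c ≤ n} = {n : ℕ | n < c}ᶜ := by
      ext n; simp [Nat.not_lt]
    rw [this]
    exact Filter.compl_mem_hyperfilter_of_finite (Set.finite_Iio c)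
  -- length bound
  have hLP : ∀ P n, K ^ P ≤ n → P ≤ L n := by
    intro P n hn
    by_contra hcon
    push_neg at hcon
    have h1 : r n < K ^ (L n) := Nat.lt_base_pow_length_digits hK
    have h2 : K ^ (L n + 1) ≤ K ^ P := Nat.pow_le_pow_right hK0 (by omega)
    rw [pow_succ] at h2
    have h3 := hr1 n
    have h4 : 1 ≤ K ^ (L n) := Nat.one_le_pow _ _ hK0
    have h5 : K ^ (L n) * 2 ≤ K ^ (L n) * K := Nat.mul_le_mul_left _ hK
    omega
  -- core computation
  have factC : ∀ n P m, P ≤ L n → m < K ^ P → m ≤ r n →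
      (g n P (sim δf q0 (X n) m P)).2 = false ∧
      τf ((g n P (sim δf q0 (X n) m P)).1) = a (r n - m) := by
    intro n P m hP hm hmr
    have hsp : listPre (X n) (L n) = listPre (X n) P ++ listPre (fun j => X n (P + j)) (L n - P) := by
      rw [← listPre_add]
      congr 1
      omega
    have hfull : simNat δf (listPre (X n) (L n)) m (q0, false)
        = g n P (sim δf q0 (X n) m P) := by
      rw [hsp, simNat_append, listPre_length, Nat.div_eq_of_lt hm]
      rfl
    obtain ⟨y, hy1, hy2, hy3⟩ := simNat_sub δf (listPre (X n) (L n)) m (q0, false)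
      (by simp only [if_neg Bool.false_ne_true, Nat.add_zero]; rw [hval n]; exact hmr)
    simp only [if_neg Bool.false_ne_true, Nat.add_zero] at hy2
    rw [hval n] at hy2
    have heq : g n P (sim δf q0 (X n) m P) = (y.foldl δf q0, false) := by
      rw [← hfull]; exact hy3
    constructor
    · rw [heq]
    · rw [heq]
      exact (H (r n - m) y (by show valF y = _; omega)).symm
  -- chain property
  have factD : ∀ n P, P + 1 ≤ L n → g n P = fun s => g n (P + 1) (step δf (X n P) 0 s) := by
    intro n P hP
    funext s
    have h1 : L n - P = (L n - (P + 1)) + 1 := by omega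
    have h2 : listPre (fun j => X n (P + j)) (L n - P)
        = X n P :: listPre (fun j => X n (P + 1 + j)) (L n - (P + 1)) := by
      rw [h1, listPre_head]
      congr 1
      apply listPre_congr
      intro i _
      congr 1
      omega
    show simNat δf _ 0 s = _
    rw [h2, simNat_cons, Nat.zero_div, Nat.zero_mod]
  -- ultrafilter limits
  have hx := fun i => ulim U (fun n => X n i)
  choose x hxmem using hx
  have hphi := fun P => ulim U (fun n => g n P)
  choose Φ hΦmem using hphi
  refine ⟨x, fun P s => τf ((Φ P s).1), ?_, ?_, ?_⟩
  · -- R1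
    intro P s
    have hset : {n : ℕ | g n P = Φ P} ∩ ({n | g n (P + 1) = Φ (P + 1)} ∩
        ({n | X n P = x P} ∩ {n : ℕ | K ^ (P + 1) ≤ n})) ∈ U :=
      Filter.inter_mem (hΦmem P) (Filter.inter_mem (hΦmem (P + 1))
        (Filter.inter_mem (hxmem P) (hcof _)))
    obtain ⟨n, hn1, hn2, hn3, hn4⟩ := Filter.nonempty_of_mem hset
    simp only [Set.mem_setOf_eq] at hn1 hn2 hn3 hn4
    have hD := factD n P (hLP (P + 1) n hn4)
    have hgs : g n P s = g n (P + 1) (step δf (X n P) 0 s) := by rw [hD]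
    show τf ((Φ P s).1) = τf ((Φ (P + 1) (step δf (x P) 0 s)).1)
    rw [← hn1, ← hn2, ← hn3, hgs]
  · -- R2
    intro P
    have hset : {n : ℕ | g n P = Φ P} ∩ ((⋂ i ∈ Finset.range P, {n | X n i = x i}) ∩
        {n : ℕ | K ^ P + 1 ≤ n}) ∈ U :=
      Filter.inter_mem (hΦmem P) (Filter.inter_mem
        ((Filter.biInter_finset_mem _).mpr (fun i _ => hxmem i)) (hcof _))
    obtain ⟨n, hn1, hn2, hn3⟩ := Filter.nonempty_of_mem hset
    simp only [Set.mem_iInter, Set.mem_setOf_eq, Finset.mem_range] at hn1 hn2 hn3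
    refine ⟨listPre (fun j => X n (P + j)) (L n - P), ?_⟩
    rintro s hs
    obtain ⟨m, hmr, rfl⟩ := Finset.mem_image.mp hs
    rw [Finset.mem_range] at hmr
    have hsimeq : sim δf q0 x m P = sim δf q0 (X n) m P :=
      sim_congr δf q0 (fun i hi => (hn2 i hi).symm) m
    have hC := factC n P m (hLP P n (by omega)) hmr (by have := hr1 n; omega)
    constructor
    · rw [hsimeq]
      exact hC.1
    · rw [hsimeq]
      show τf ((Φ P (sim δf q0 (X n) m P)).1) = τf ((g n P (sim δf q0 (X n) m P)).1)
      rw [← hn1]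
  · -- R3
    intro P m hm
    have hset : {n : ℕ | g n P = Φ P} ∩ ((⋂ i ∈ Finset.range P, {n | X n i = x i}) ∩
        ({n : ℕ | K ^ P ≤ n} ∩ {n : ℕ | m + 1 ≤ n})) ∈ U :=
      Filter.inter_mem (hΦmem P) (Filter.inter_mem
        ((Filter.biInter_finset_mem _).mpr (fun i _ => hxmem i))
        (Filter.inter_mem (hcof _) (hcof _)))
    obtain ⟨n, hn1, hn2, hn3, hn4⟩ := Filter.nonempty_of_mem hset
    simp only [Set.mem_iInter, Set.mem_setOf_eq, Finset.mem_range] at hn1 hn2 hn3 hn4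
    have hsimeq : sim δf q0 x m P = sim δf q0 (X n) m P :=
      sim_congr δf q0 (fun i hi => (hn2 i hi).symm) m
    have hC := factC n P m (hLP P n hn3) hm (by have := hr1 n; omega)
    rw [hr2 n m (by omega), ← hC.2, hsimeq, hn1]

end Extract

section Stream
variable (δf : Fin N → Fin K → Fin N) (q0 : Fin N)

lemma OAt_lt_iff (x : ℕ → Fin K) (P : ℕ) (ψ ψ' : Fin N × Bool → Δ) :
    OAt δf q0 x P ψ ψ' = .lt ↔
      ∃ m0 < K ^ P, (∀ m < m0, ψ (sim δf q0 x m P) = ψ' (sim δf q0 x m P)) ∧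
        ψ (sim δf q0 x m0 P) < ψ' (sim δf q0 x m0 P) :=
  cmpSeq_lt_iff _ _ _

lemma OAt_swap (x : ℕ → Fin K) (P : ℕ) (ψ ψ' : Fin N × Bool → Δ) :
    OAt δf q0 x P ψ' ψ = (OAt δf q0 x P ψ ψ').swap :=
  cmpSeq_swap _ _ _

lemma lexle_stream (hK : 1 < K) (x : ℕ → Fin K) (P : ℕ)
    (Ψ Ψ' : ℕ → (Fin N × Bool) → Δ) (c c' : ℕ → Δ)
    (hc : ∀ m, c m = Ψ (m / K ^ P) (sim δf q0 x (m % K ^ P) P))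
    (hc' : ∀ m, c' m = Ψ' (m / K ^ P) (sim δf q0 x (m % K ^ P) P))
    (hle : SeqLexLe c c') :
    (∀ t, OAt δf q0 x P (Ψ t) (Ψ' t) = .eq) ∨
      ∃ t, (∀ t' < t, OAt δf q0 x P (Ψ t') (Ψ' t') = .eq) ∧
        OAt δf q0 x P (Ψ t) (Ψ' t) = .lt := by
  have hK0 : 0 < K := by omega
  have hB : 0 < K ^ P := pow_pos hK0 P
  have hidx : ∀ t m, m < K ^ P →
      (K ^ P * t + m) / K ^ P = t ∧ (K ^ P * t + m) % K ^ P = m := by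
    intro t m hm
    constructor
    · rw [Nat.mul_add_div hB, Nat.div_eq_of_lt hm, Nat.add_zero]
    · rw [Nat.mul_add_mod, Nat.mod_eq_of_lt hm]
  rcases hle with heq | ⟨n0, hpre, hlt⟩
  · left
    intro t
    rw [OAt_eq_iff]
    intro m hm
    have h1 := hc (K ^ P * t + m)
    have h2 := hc' (K ^ P * t + m)
    rw [(hidx t m hm).1, (hidx t m hm).2] at h1 h2
    rw [← h1, ← h2, heq]
  · right
    refine ⟨n0 / K ^ P, ?_, ?_⟩
    · intro t' ht'
      rw [OAt_eq_iff]
      intro m hm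
      have h1 := hc (K ^ P * t' + m)
      have h2 := hc' (K ^ P * t' + m)
      rw [(hidx t' m hm).1, (hidx t' m hm).2] at h1 h2
      have hlt2 : K ^ P * t' + m < n0 := by
        have e1 : K ^ P * (t' + 1) ≤ K ^ P * (n0 / K ^ P) :=
          Nat.mul_le_mul_left _ (by omega)
        have e2 : K ^ P * (n0 / K ^ P) ≤ n0 := Nat.mul_div_le n0 (K ^ P)
        rw [Nat.mul_succ] at e1
        omega
      rw [← h1, ← h2, hpre _ hlt2]
    · rw [OAt_lt_iff]
      refine ⟨n0 % K ^ P, Nat.mod_lt _ hB, ?_, ?_⟩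
      · intro m hm
        have hmlt : m < K ^ P := lt_trans hm (Nat.mod_lt _ hB)
        have h1 := hc (K ^ P * (n0 / K ^ P) + m)
        have h2 := hc' (K ^ P * (n0 / K ^ P) + m)
        rw [(hidx _ m hmlt).1, (hidx _ m hmlt).2] at h1 h2
        have hlt2 : K ^ P * (n0 / K ^ P) + m < n0 := by
          have := Nat.div_add_mod n0 (K ^ P)
          omega
        rw [← h1, ← h2, hpre _ hlt2]
      · have h1 := hc n0
        have h2 := hc' n0
        have hd := Nat.div_add_mod n0 (K ^ P)
        have h1' : c n0 = Ψ (n0 / K ^ P) (sim δf q0 x (n0 % K ^ P) P) := h1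
        have h2' : c' n0 = Ψ' (n0 / K ^ P) (sim δf q0 x (n0 % K ^ P) P) := h2
        rw [← h1', ← h2']
        exact hlt

lemma stream_antisym (x : ℕ → Fin K) (P : ℕ) (Ψ Ψ' : ℕ → (Fin N × Bool) → Δ)
    (h1 : (∀ t, OAt δf q0 x P (Ψ t) (Ψ' t) = .eq) ∨
      ∃ t, (∀ t' < t, OAt δf q0 x P (Ψ t') (Ψ' t') = .eq) ∧
        OAt δf q0 x P (Ψ t) (Ψ' t) = .lt)
    (h2 : (∀ t, OAt δf q0 x P (Ψ' t) (Ψ t) = .eq) ∨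
      ∃ t, (∀ t' < t, OAt δf q0 x P (Ψ' t') (Ψ t') = .eq) ∧
        OAt δf q0 x P (Ψ' t) (Ψ t) = .lt) :
    ∀ t, OAt δf q0 x P (Ψ t) (Ψ' t) = .eq := by
  rcases h1 with h1 | ⟨t1, hpre1, hlt1⟩
  · exact h1
  rcases h2 with h2 | ⟨t2, hpre2, hlt2⟩
  · exact fun t => OAt_eq_symm δf q0 (h2 t)
  exfalso
  rcases Nat.lt_trichotomy t1 t2 with h | h | h
  · have := OAt_eq_symm δf q0 (hpre2 t1 h)
    rw [this] at hlt1
    exact absurd hlt1 (by decide)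
  · subst h
    rw [OAt_swap] at hlt2
    rw [hlt1] at hlt2
    exact absurd hlt2 (by decide)
  · have := OAt_eq_symm δf q0 (hpre1 t2 h)
    rw [this] at hlt2
    exact absurd hlt2 (by decide)

lemma famAt_lift (hK : 1 < K) {x : ℕ → Fin K} {φ : ℕ → (Fin N × Bool) → Δ}
    (r1 : R1 δf x φ) (P t L : ℕ) (hL : t + 1 ≤ L) :
    famAt δf x φ P t =
      fun s => φ (P + L) (simNat δf (listPre (fun j => x (P + j)) L) t s) := by
  induction L, hL using Nat.le_induction with
  | base => rfl
  | succ L hL ih =>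
    rw [ih]
    funext s
    rw [listPre_succ, simNat_append, listPre_length]
    have ht : t / K ^ L = 0 :=
      Nat.div_eq_of_lt (lt_of_lt_of_le (Nat.lt_pow_self (n := t) hK)
        (Nat.pow_le_pow_right (by omega) (by omega)))
    rw [ht, simNat_cons, Nat.zero_div, Nat.zero_mod, simNat_nil]
    exact r1 (P + L) _

lemma fam_prepend (hK : 1 < K) (xa xb xt : ℕ → Fin K)
    (φa φb : ℕ → (Fin N × Bool) → Δ) (R L : ℕ)
    (r1a : R1 δf xa φa) (r1b : R1 δf xb φb)
    (hagree : ∀ j < L, xa (R + j) = xb (R + j))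
    (hxt : ∀ j < L, xt (R + j) = xa (R + j))
    (hEq : ∀ t, OAt δf q0 xt (R + L) (famAt δf xa φa (R + L) t)
      (famAt δf xb φb (R + L) t) = .eq) :
    ∀ t, OAt δf q0 xt R (famAt δf xa φa R t) (famAt δf xb φb R t) = .eq := by
  have hK0 : 0 < K := by omega
  intro t
  -- the common block read by both futures
  set u : List (Fin K) := listPre (fun j => xa (R + j)) L with hu
  have hulen : u.length = L := listPre_length _ _
  have hub : listPre (fun j => xb (R + j)) L = u := by
    apply listPre_congr
    intro i hi
    exact (hagree i hi).symm
  have hut : listPre (fun j => xt (R + j)) L = u := by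
    apply listPre_congr
    intro i hi
    exact hxt i hi
  -- key decomposition of the families
  have key : ∀ (xc : ℕ → Fin K) (φc : ℕ → (Fin N × Bool) → Δ), R1 δf xc φc →
      (listPre (fun j => xc (R + j)) L = u) →
      ∀ s, famAt δf xc φc R t s
        = famAt δf xc φc (R + L) (t / K ^ L) (simNat δf u t s) := by
    intro xc φc r1c huc s
    rw [famAt_lift δf hK r1c R t (L + (t + 1)) (by omega)]
    have hsp : listPre (fun j => xc (R + j)) (L + (t + 1))
        = u ++ listPre (fun j => xc (R + L + j)) (t + 1) := by
      rw [listPre_add, huc]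
      congr 1
      apply listPre_congr
      intro i _
      congr 1
      omega
    show φc (R + (L + (t + 1)))
      (simNat δf (listPre (fun j => xc (R + j)) (L + (t + 1))) t s) = _
    rw [hsp, simNat_append, hulen]
    rw [famAt_lift δf hK r1c (R + L) (t / K ^ L) (t + 1)
      (by have := Nat.div_le_self t (K ^ L); omega)]
    show φc (R + (L + (t + 1))) _ = φc (R + L + (t + 1)) _
    congr 1
    omega
  rw [OAt_eq_iff]
  intro m hm
  rw [key xa φa r1a rfl, key xb φb r1b hub]
  -- transfer along the point of level R+L
  have hmod : t / K ^ L = (t % K ^ (u.length)) / K ^ L + 0 ∨ True := Or.inr trivial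
  have hsim : simNat δf u t (sim δf q0 xt m R)
      = sim δf q0 xt (K ^ R * (t % K ^ L) + m) (R + L) := by
    rw [sim_split δf q0 xt _ R L]
    have h1 : (K ^ R * (t % K ^ L) + m) / K ^ R = t % K ^ L := by
      rw [Nat.mul_add_div (pow_pos hK0 R), Nat.div_eq_of_lt hm, Nat.add_zero]
    have h2 : sim δf q0 xt (K ^ R * (t % K ^ L) + m) R = sim δf q0 xt m R := by
      rw [sim_mod δf q0 xt _ R, Nat.mul_add_mod, Nat.mod_eq_of_lt hm]
    rw [h1, h2, hut]
    conv_lhs => rw [simNat_mod δf u t, hulen]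
  rw [hsim]
  have hmlt : K ^ R * (t % K ^ L) + m < K ^ (R + L) := by
    have h1 : t % K ^ L < K ^ L := Nat.mod_lt _ (pow_pos hK0 L)
    have h2 : K ^ R * (t % K ^ L + 1) ≤ K ^ R * K ^ L := Nat.mul_le_mul_left _ (by omega)
    rw [Nat.mul_succ] at h2
    rw [pow_add]
    omega
  exact (OAt_eq_iff δf q0 xt (R + L) _ _).mp (hEq (t / K ^ L)) _ hmlt

end Stream

section Graft
variable (δf : Fin N → Fin K → Fin N) (q0 : Fin N) (τf : Fin N → Δ)

lemma mod_succ_eq (a l : ℕ) (hl : 0 < l) :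
    (a + 1) % l = if a % l + 1 = l then 0 else a % l + 1 := by
  have h1 := Nat.div_add_mod a l
  have h2 : a % l < l := Nat.mod_lt _ hl
  by_cases hc : a % l + 1 = l
  · rw [if_pos hc]
    have h3 : a + 1 = l * (a / l + 1) := by rw [Nat.mul_succ]; omega
    rw [h3, Nat.mul_mod_right]
  · rw [if_neg hc]
    have h3 : a + 1 = l * (a / l) + (a % l + 1) := by omega
    rw [h3, Nat.mul_add_mod]
    exact Nat.mod_eq_of_lt (by omega)

def graftX (x1 x2 : ℕ → Fin K) (S T : ℕ) : ℕ → Fin K :=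
  fun i => if i < S then x1 i else x2 (T + (i - S))

def graftPhi (φ1 φ2 : ℕ → (Fin N × Bool) → Δ) (S T : ℕ) : ℕ → (Fin N × Bool) → Δ :=
  fun i => if i < S then φ1 i else φ2 (T + (i - S))

lemma graftX_lt {x1 x2 : ℕ → Fin K} {S T i : ℕ} (h : i < S) :
    graftX x1 x2 S T i = x1 i := by
  unfold graftX; rw [if_pos h]

lemma graftX_ge {x1 x2 : ℕ → Fin K} {S T : ℕ} (j : ℕ) :
    graftX x1 x2 S T (S + j) = x2 (T + j) := by
  unfold graftX
  rw [if_neg (by omega), show T + (S + j - S) = T + j by omega]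

lemma graftPhi_lt {φ1 φ2 : ℕ → (Fin N × Bool) → Δ} {S T i : ℕ} (h : i < S) :
    graftPhi φ1 φ2 S T i = φ1 i := by
  unfold graftPhi; rw [if_pos h]

lemma graftPhi_ge {φ1 φ2 : ℕ → (Fin N × Bool) → Δ} {S T : ℕ} (j : ℕ) :
    graftPhi φ1 φ2 S T (S + j) = φ2 (T + j) := by
  unfold graftPhi
  rw [if_neg (by omega), show T + (S + j - S) = T + j by omega]

lemma R1_graft {x1 x2 : ℕ → Fin K} {φ1 φ2 : ℕ → (Fin N × Bool) → Δ}
    (r1a : R1 δf x1 φ1) (r1b : R1 δf x2 φ2) (S T : ℕ)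
    (hφ : φ1 S = φ2 T) : R1 δf (graftX x1 x2 S T) (graftPhi φ1 φ2 S T) := by
  intro i s
  rcases Nat.lt_or_ge i S with hi | hi
  · rw [graftX_lt hi, graftPhi_lt hi]
    rcases Nat.lt_or_ge (i + 1) S with hi1 | hi1
    · rw [graftPhi_lt hi1]
      exact r1a i s
    · have hS : i + 1 = S := by omega
      have h1 : graftPhi φ1 φ2 S T (i + 1) = φ2 T := by
        unfold graftPhi
        rw [if_neg (by omega), show T + (i + 1 - S) = T by omega]
      rw [h1, ← hφ, ← hS]
      exact r1a i s
  · have h0 : i = S + (i - S) := by omega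
    have h1 : graftX x1 x2 S T i = x2 (T + (i - S)) := by
      conv_lhs => rw [h0]
      rw [graftX_ge]
    have h2 : graftPhi φ1 φ2 S T i = φ2 (T + (i - S)) := by
      conv_lhs => rw [h0]
      rw [graftPhi_ge]
    have h3 : graftPhi φ1 φ2 S T (i + 1) = φ2 ((T + (i - S)) + 1) := by
      conv_lhs => rw [show i + 1 = S + (i + 1 - S) by omega]
      rw [graftPhi_ge, show T + (i + 1 - S) = (T + (i - S)) + 1 by omega]
    rw [h1, h2, h3]
    exact r1b (T + (i - S)) s

def perX (x : ℕ → Fin K) (P l : ℕ) : ℕ → Fin K :=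
  fun i => if i < P then x i else x (P + (i - P) % l)

def perPhi (φ : ℕ → (Fin N × Bool) → Δ) (P l : ℕ) : ℕ → (Fin N × Bool) → Δ :=
  fun i => if i < P then φ i else φ (P + (i - P) % l)

lemma perX_lt {x : ℕ → Fin K} {P l i : ℕ} (h : i < P) : perX x P l i = x i := by
  unfold perX; rw [if_pos h]

lemma perX_ge {x : ℕ → Fin K} {P l : ℕ} (j : ℕ) :
    perX x P l (P + j) = x (P + j % l) := by
  unfold perX
  rw [if_neg (by omega), show P + j - P = j by omega]

lemma perPhi_lt {φ : ℕ → (Fin N × Bool) → Δ} {P l i : ℕ} (h : i < P) :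
    perPhi φ P l i = φ i := by
  unfold perPhi; rw [if_pos h]

lemma perPhi_ge {φ : ℕ → (Fin N × Bool) → Δ} {P l : ℕ} (j : ℕ) :
    perPhi φ P l (P + j) = φ (P + j % l) := by
  unfold perPhi
  rw [if_neg (by omega), show P + j - P = j by omega]

lemma R1_per {x : ℕ → Fin K} {φ : ℕ → (Fin N × Bool) → Δ}
    (r1 : R1 δf x φ) (P l : ℕ) (hl : 0 < l) (hφ : φ (P + l) = φ P) :
    R1 δf (perX x P l) (perPhi φ P l) := by
  intro i s
  rcases Nat.lt_or_ge i P with hi | hi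
  · rw [perX_lt hi, perPhi_lt hi]
    rcases Nat.lt_or_ge (i + 1) P with hi1 | hi1
    · rw [perPhi_lt hi1]
      exact r1 i s
    · have hP : i + 1 = P := by omega
      have h1 : perPhi φ P l (i + 1) = φ P := by
        have : i + 1 = P + 0 := by omega
        rw [this, perPhi_ge, Nat.zero_mod, Nat.add_zero]
      rw [h1, ← hP]
      exact r1 i s
  · have h0 : i = P + (i - P) := by omega
    have h1 : perX x P l i = x (P + (i - P) % l) := by
      conv_lhs => rw [h0]
      rw [perX_ge]
    have h2 : perPhi φ P l i = φ (P + (i - P) % l) := by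
      conv_lhs => rw [h0]
      rw [perPhi_ge]
    have h3 : perPhi φ P l (i + 1) = φ (P + ((i - P) + 1) % l) := by
      conv_lhs => rw [show i + 1 = P + ((i - P) + 1) by omega]
      rw [perPhi_ge]
    rw [h1, h2, h3, mod_succ_eq _ _ hl]
    by_cases hc : (i - P) % l + 1 = l
    · rw [if_pos hc, Nat.add_zero, ← hφ]
      have h4 : P + l = (P + (i - P) % l) + 1 := by omega
      rw [h4]
      exact r1 _ s
    · rw [if_neg hc]
      have h4 : P + ((i - P) % l + 1) = (P + (i - P) % l) + 1 := by omega
      rw [h4]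
      exact r1 _ s

lemma A_transport (hK0 : 0 < K) (x x' : ℕ → Fin K) (P P' : ℕ)
    (hA : AAt δf q0 x' P' = AAt δf q0 x P)
    (hdig : ∀ j, x' (P' + j) = x (P + j)) :
    ∀ j, AAt δf q0 x' (P' + j) = AAt δf q0 x (P + j) := by
  intro j
  induction j with
  | zero => exact hA
  | succ j ih =>
    rw [show P' + (j + 1) = (P' + j) + 1 from rfl, show P + (j + 1) = (P + j) + 1 from rfl,
      AAt_succ δf q0 hK0, AAt_succ δf q0 hK0, ih, hdig j]

lemma R2_graft (hK0 : 0 < K) {x1 x2 : ℕ → Fin K} {φ1 φ2 : ℕ → (Fin N × Bool) → Δ}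
    (S T : ℕ)
    (h2a : ∀ i < S, ∃ w : List (Fin K), ∀ s ∈ AAt δf q0 x1 i,
      (simNat δf w 0 s).2 = false ∧ φ1 i s = τf ((simNat δf w 0 s).1))
    (h2b : R2 δf q0 τf x2 φ2)
    (hA : AAt δf q0 x1 S = AAt δf q0 x2 T) :
    R2 δf q0 τf (graftX x1 x2 S T) (graftPhi φ1 φ2 S T) := by
  have hbase : AAt δf q0 (graftX x1 x2 S T) S = AAt δf q0 x2 T := by
    rw [AAt_congr δf q0 (fun j hj => graftX_lt hj), hA]
  have htr := A_transport δf q0 hK0 x2 (graftX x1 x2 S T) T S hbase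
    (fun j => graftX_ge j)
  intro i
  rcases Nat.lt_or_ge i S with hi | hi
  · obtain ⟨w, hw⟩ := h2a i hi
    refine ⟨w, ?_⟩
    have hAA : AAt δf q0 (graftX x1 x2 S T) i = AAt δf q0 x1 i :=
      AAt_congr δf q0 (fun j hj => graftX_lt (by omega))
    rw [hAA, graftPhi_lt hi]
    exact hw
  · obtain ⟨w, hw⟩ := h2b (T + (i - S))
    refine ⟨w, ?_⟩
    have hAi : AAt δf q0 (graftX x1 x2 S T) i = AAt δf q0 x2 (T + (i - S)) := by
      have := htr (i - S)
      rwa [show S + (i - S) = i by omega] at this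
    have hφi : graftPhi φ1 φ2 S T i = φ2 (T + (i - S)) := by
      conv_lhs => rw [show i = S + (i - S) by omega]
      rw [graftPhi_ge]
    rw [hAi, hφi]
    exact hw

end Graft

section Exchange
variable (δf : Fin N → Fin K → Fin N) (q0 : Fin N) (τf : Fin N → Δ)

lemma exchange_core (hK : 1 < K) (a b : ℕ → Δ)
    (H : ∀ (m : ℕ) (w : List (Fin K)),
      Nat.ofDigits K (w.map Fin.val) = m → a m = τf (w.foldl δf q0))
    {x : ℕ → Fin K} {φ : ℕ → (Fin N × Bool) → Δ}
    (h1 : R1 δf x φ) (h2 : R2 δf q0 τf x φ) (h3 : R3 δf q0 x φ b)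
    (hleast : ∀ c : ℕ → Δ, InRevOrbitClosure a c → SeqLexLe b c)
    (P Q : ℕ) (hPQ : P < Q) (hφPQ : φ P = φ Q)
    (hOPQ : OAt (Δ := Δ) δf q0 x P = OAt δf q0 x Q)
    (hAPQ : AAt δf q0 x P = AAt δf q0 x Q) :
    ∃ (x' : ℕ → Fin K) (φ' : ℕ → (Fin N × Bool) → Δ) (P' l : ℕ), 0 < l ∧
      (∀ i, P' ≤ i → x' (i + l) = x' i) ∧ (∀ i, P' ≤ i → φ' (i + l) = φ' i) ∧
      R1 δf x' φ' ∧ R3 δf q0 x' φ' b := by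
  have hK0 : 0 < K := by omega
  set l := Q - P with hldef
  have hl0 : 0 < l := by omega
  have hQ : Q = P + l := by omega
  -- the periodic pair
  have r1per : R1 δf (perX x P l) (perPhi φ P l) := by
    apply R1_per δf h1 P l hl0
    rw [← hQ, ← hφPQ]
  -- z-rep (graft at Q, future from P), in the closure
  have r1z : R1 δf (graftX x x Q P) (graftPhi φ φ Q P) :=
    R1_graft δf h1 h1 Q P hφPQ.symm
  have r2z : R2 δf q0 τf (graftX x x Q P) (graftPhi φ φ Q P) :=
    R2_graft δf q0 τf hK0 Q P (fun i _ => h2 i) h2 hAPQ.symm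
  have r3z := r1_r3 δf q0 hK r1z
  have hcz : InRevOrbitClosure a
      (fun m => graftPhi φ φ Q P (m + 1) (sim δf q0 (graftX x x Q P) m (m + 1))) :=
    rep_closure δf q0 τf hK a H r2z r3z
  -- y0-rep (graft at P, future from Q), in the closure
  have r1y0 : R1 δf (graftX x x P Q) (graftPhi φ φ P Q) :=
    R1_graft δf h1 h1 P Q hφPQ
  have r2y0 : R2 δf q0 τf (graftX x x P Q) (graftPhi φ φ P Q) :=
    R2_graft δf q0 τf hK0 P Q (fun i _ => h2 i) h2 hAPQ
  have r3y0 := r1_r3 δf q0 hK r1y0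
  have hcy0 : InRevOrbitClosure a
      (fun m => graftPhi φ φ P Q (m + 1) (sim δf q0 (graftX x x P Q) m (m + 1))) :=
    rep_closure δf q0 τf hK a H r2y0 r3y0
  -- output formulas
  have hbQ : ∀ m, b m = famAt δf x φ Q (m / K ^ Q) (sim δf q0 x (m % K ^ Q) Q) :=
    fun m => out_formula δf q0 hK h3 Q m
  have hbP : ∀ m, b m = famAt δf x φ P (m / K ^ P) (sim δf q0 x (m % K ^ P) P) :=
    fun m => out_formula δf q0 hK h3 P m
  have hfamz : ∀ t, famAt δf (graftX x x Q P) (graftPhi φ φ Q P) Q t = famAt δf x φ P t := by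
    intro t
    exact famAt_eq_of δf t (fun j _ => graftX_ge j) (graftPhi_ge (t + 1))
  have hfamy0 : ∀ t, famAt δf (graftX x x P Q) (graftPhi φ φ P Q) P t = famAt δf x φ Q t := by
    intro t
    exact famAt_eq_of δf t (fun j _ => graftX_ge j) (graftPhi_ge (t + 1))
  have hczF : ∀ m, (fun m => graftPhi φ φ Q P (m + 1) (sim δf q0 (graftX x x Q P) m (m + 1))) m
      = famAt δf x φ P (m / K ^ Q) (sim δf q0 x (m % K ^ Q) Q) := by
    intro m
    show graftPhi φ φ Q P (m + 1) (sim δf q0 (graftX x x Q P) m (m + 1)) = _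
    rw [out_formula δf q0 hK r3z Q m, hfamz,
      sim_congr δf q0 (fun i hi => graftX_lt hi) (m % K ^ Q)]
  have hcy0F : ∀ m, (fun m => graftPhi φ φ P Q (m + 1) (sim δf q0 (graftX x x P Q) m (m + 1))) m
      = famAt δf x φ Q (m / K ^ P) (sim δf q0 x (m % K ^ P) P) := by
    intro m
    show graftPhi φ φ P Q (m + 1) (sim δf q0 (graftX x x P Q) m (m + 1)) = _
    rw [out_formula δf q0 hK r3y0 P m, hfamy0,
      sim_congr δf q0 (fun i hi => graftX_lt hi) (m % K ^ P)]
  -- stream comparisons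
  have hs1 := lexle_stream δf q0 hK x Q (famAt δf x φ Q) (famAt δf x φ P) b _ hbQ hczF
    (hleast _ hcz)
  have hs2 := lexle_stream δf q0 hK x P (famAt δf x φ P) (famAt δf x φ Q) b _ hbP hcy0F
    (hleast _ hcy0)
  rw [← hOPQ] at hs1
  have hstar : ∀ t, OAt δf q0 x P (famAt δf x φ P t) (famAt δf x φ Q t) = .eq :=
    stream_antisym δf q0 x P _ _ hs2 hs1
  -- the y_i interpolating representations
  have hpφQ : ∀ i : ℕ, perPhi φ P l (P + i * l) = φ Q := by
    intro i
    rw [perPhi_ge, Nat.mul_mod_left, Nat.add_zero, hφPQ]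
  have r1y : ∀ i, R1 δf (graftX (perX x P l) x (P + i * l) Q)
      (graftPhi (perPhi φ P l) φ (P + i * l) Q) := by
    intro i
    exact R1_graft δf r1per h1 (P + i * l) Q (hpφQ i)
  have hpx_x : ∀ j, j < Q → perX x P l j = x j := by
    intro j hj
    rcases Nat.lt_or_ge j P with h | h
    · exact perX_lt h
    · have h0 : j = P + (j - P) := by omega
      conv_lhs => rw [h0]
      rw [perX_ge, Nat.mod_eq_of_lt (by omega)]
      exact congrArg x (by omega)
  have hpφ_φ : ∀ j, j < Q → perPhi φ P l j = φ j := by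
    intro j hj
    rcases Nat.lt_or_ge j P with h | h
    · exact perPhi_lt h
    · have h0 : j = P + (j - P) := by omega
      conv_lhs => rw [h0]
      rw [perPhi_ge, Nat.mod_eq_of_lt (by omega)]
      exact congrArg φ (by omega)
  have hyx1 : ∀ j, graftX (perX x P l) x (P + 1 * l) Q j = x j := by
    intro j
    rcases Nat.lt_or_ge j (P + 1 * l) with h | h
    · rw [graftX_lt h, hpx_x j (by omega)]
    · have h0 : j = (P + 1 * l) + (j - (P + 1 * l)) := by omega
      conv_lhs => rw [h0]
      rw [graftX_ge]
      exact congrArg x (by omega)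
  have hyφ1 : ∀ j, graftPhi (perPhi φ P l) φ (P + 1 * l) Q j = φ j := by
    intro j
    rcases Nat.lt_or_ge j (P + 1 * l) with h | h
    · rw [graftPhi_lt h, hpφ_φ j (by omega)]
    · have h0 : j = (P + 1 * l) + (j - (P + 1 * l)) := by omega
      conv_lhs => rw [h0]
      rw [graftPhi_ge]
      exact congrArg φ (by omega)
  -- shift identities
  have hyxshift : ∀ i j, graftX (perX x P l) x (P + (i + 1) * l) Q (P + l + j)
      = graftX (perX x P l) x (P + i * l) Q (P + j) := by
    intro i j
    have hil : (i + 1) * l = i * l + l := by ring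
    rcases Nat.lt_or_ge j (i * l) with h | h
    · rw [graftX_lt (by omega), graftX_lt (by omega)]
      have e1 : P + l + j = P + (l + j) := by omega
      rw [e1, perX_ge, perX_ge, Nat.add_mod_left]
    · have e1 : P + l + j = (P + (i + 1) * l) + (j - i * l) := by omega
      have e2 : P + j = (P + i * l) + (j - i * l) := by omega
      rw [e1, e2, graftX_ge, graftX_ge]
  have hyφshift : ∀ i j, graftPhi (perPhi φ P l) φ (P + (i + 1) * l) Q (P + l + j)
      = graftPhi (perPhi φ P l) φ (P + i * l) Q (P + j) := by
    intro i j
    have hil : (i + 1) * l = i * l + l := by ring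
    rcases Nat.lt_or_ge j (i * l) with h | h
    · rw [graftPhi_lt (by omega), graftPhi_lt (by omega)]
      have e1 : P + l + j = P + (l + j) := by omega
      rw [e1, perPhi_ge, perPhi_ge, Nat.add_mod_left]
    · have e1 : P + l + j = (P + (i + 1) * l) + (j - i * l) := by omega
      have e2 : P + j = (P + i * l) + (j - i * l) := by omega
      rw [e1, e2, graftPhi_ge, graftPhi_ge]
  have hshift : ∀ i t, famAt δf (graftX (perX x P l) x (P + (i + 1) * l) Q)
        (graftPhi (perPhi φ P l) φ (P + (i + 1) * l) Q) (P + l) t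
      = famAt δf (graftX (perX x P l) x (P + i * l) Q)
        (graftPhi (perPhi φ P l) φ (P + i * l) Q) P t := by
    intro i t
    exact famAt_eq_of δf t (fun j _ => hyxshift i j) (hyφshift i (t + 1))
  -- the prefix of each y_i agrees with x on [P, P+l)
  have hyx_pre : ∀ i j, 0 < i → j < l → graftX (perX x P l) x (P + i * l) Q (P + j) = x (P + j) := by
    intro i j hi hj
    rw [graftX_lt (by
      have : 1 * l ≤ i * l := Nat.mul_le_mul_right _ hi
      omega)]
    exact hpx_x (P + j) (by omega)
  -- the families at level P
  have e1fam : ∀ t, famAt δf (graftX (perX x P l) x (P + 1 * l) Q)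
      (graftPhi (perPhi φ P l) φ (P + 1 * l) Q) P t = famAt δf x φ P t := by
    intro t
    exact famAt_eq_of δf t (fun j _ => hyx1 (P + j)) (hyφ1 (P + (t + 1)))
  have e0fam : ∀ t, famAt δf (graftX (perX x P l) x (P + 0 * l) Q)
      (graftPhi (perPhi φ P l) φ (P + 0 * l) Q) P t = famAt δf x φ Q t := by
    intro t
    apply famAt_eq_of δf t
    · intro j _
      have e : P + j = (P + 0 * l) + j := by omega
      conv_lhs => rw [e]
      rw [graftX_ge]
    · have e : P + (t + 1) = (P + 0 * l) + (t + 1) := by omega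
      conv_lhs => rw [e]
      rw [graftPhi_ge]
  -- the Eqs chain
  have hEqs : ∀ i t, OAt δf q0 x P
      (famAt δf (graftX (perX x P l) x (P + (i + 1) * l) Q)
        (graftPhi (perPhi φ P l) φ (P + (i + 1) * l) Q) P t)
      (famAt δf (graftX (perX x P l) x (P + i * l) Q)
        (graftPhi (perPhi φ P l) φ (P + i * l) Q) P t) = .eq := by
    intro i
    induction i with
    | zero =>
      intro t
      rw [e1fam t, e0fam t]
      exact hstar t
    | succ i ih =>
      apply fam_prepend δf q0 hK _ _ x _ _ P l (r1y (i + 2)) (r1y (i + 1))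
        (fun j hj => by rw [hyx_pre (i + 2) j (by omega) hj, hyx_pre (i + 1) j (by omega) hj])
        (fun j hj => (hyx_pre (i + 2) j (by omega) hj).symm)
      intro t
      rw [hshift (i + 1) t, hshift i t, show P + l = Q from hQ.symm, ← hOPQ]
      exact ih t
  -- the dagger chain
  have hdag : ∀ i t, OAt δf q0 x P
      (famAt δf (graftX (perX x P l) x (P + i * l) Q)
        (graftPhi (perPhi φ P l) φ (P + i * l) Q) P t)
      (famAt δf x φ P t) = .eq := by
    intro i
    induction i with
    | zero =>
      intro t
      rw [e0fam t]
      exact OAt_eq_symm δf q0 (hstar t)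
    | succ i ih =>
      intro t
      exact OAt_eq_trans δf q0 (hEqs i t) (ih t)
  -- the periodic family agrees
  have hstar2 : ∀ t, OAt δf q0 x P (famAt δf (perX x P l) (perPhi φ P l) P t)
      (famAt δf x φ P t) = .eq := by
    intro t
    have hfam : famAt δf (perX x P l) (perPhi φ P l) P t
        = famAt δf (graftX (perX x P l) x (P + (t + 2) * l) Q)
          (graftPhi (perPhi φ P l) φ (P + (t + 2) * l) Q) P t := by
      have hbig : ∀ j, j ≤ t + 1 → P + j < P + (t + 2) * l := by
        intro j hj
        have : t + 2 ≤ (t + 2) * l := Nat.le_mul_of_pos_right _ hl0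
        omega
      exact famAt_eq_of δf t (fun j hj => (graftX_lt (hbig j (by omega))).symm)
        ((graftPhi_lt (hbig (t + 1) le_rfl)).symm)
    rw [hfam]
    exact hdag (t + 2) t
  -- conclusion
  refine ⟨perX x P l, perPhi φ P l, P, l, hl0, ?_, ?_, r1per, ?_⟩
  · intro i hi
    have h0 : i = P + (i - P) := by omega
    conv_lhs => rw [show i + l = P + ((i - P) + l) by omega]
    conv_rhs => rw [h0]
    rw [perX_ge, perX_ge, Nat.add_mod_right]
  · intro i hi
    have h0 : i = P + (i - P) := by omega
    conv_lhs => rw [show i + l = P + ((i - P) + l) by omega]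
    conv_rhs => rw [h0]
    rw [perPhi_ge, perPhi_ge, Nat.add_mod_right]
  · have r3per := r1_r3 δf q0 hK r1per
    have hbper : ∀ m, perPhi φ P l (m + 1) (sim δf q0 (perX x P l) m (m + 1)) = b m := by
      intro m
      have e2 : sim δf q0 (perX x P l) (m % K ^ P) P = sim δf q0 x (m % K ^ P) P :=
        sim_congr δf q0 (fun i hi => perX_lt hi) _
      have e3 := (OAt_eq_iff δf q0 x P _ _).mp (hstar2 (m / K ^ P)) (m % K ^ P)
        (Nat.mod_lt _ (pow_pos hK0 P))
      have e4 := out_formula δf q0 hK r3per P m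
      rw [hbP m, ← e3, ← e2, ← e4]
    intro P' m hm
    rw [← hbper m]
    exact r3per P' m hm

end Exchange

section Automaton
variable (δf : Fin N → Fin K → Fin N) (q0 : Fin N)

lemma isKAutomatic_of_fintype {S : Type} [Fintype S] (k : ℕ) (b : ℕ → Δ)
    (δ' : S → Fin k → S) (q0' : S) (τ' : S → Δ)
    (h : ∀ (m : ℕ) (w : List (Fin k)),
      Nat.ofDigits k (w.map Fin.val) = m → b m = τ' (w.foldl δ' q0')) :
    IsKAutomatic k b := by
  let e := Fintype.equivFin S
  have comm : ∀ (w : List (Fin k)) (s : S),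
      w.foldl (fun i d => e (δ' (e.symm i) d)) (e s) = e (w.foldl δ' s) := by
    intro w
    induction w with
    | nil => intro s; rfl
    | cons d w ih =>
      intro s
      show List.foldl _ (e (δ' (e.symm (e s)) d)) w = _
      rw [e.symm_apply_apply, ih]
      rfl
  refine ⟨Fintype.card S, fun i d => e (δ' (e.symm i) d), e q0', fun i => τ' (e.symm i), ?_⟩
  intro m w hw
  rw [h m w hw, comm w q0']
  exact congrArg τ' (e.symm_apply_apply _).symm

def autoNext (x : ℕ → Fin K) (P l : ℕ) (hl : 0 < l) :
    (Fin (P + l) × (Fin N × Bool)) → Fin K → (Fin (P + l) × (Fin N × Bool)) :=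
  fun p d => (⟨if p.1.1 + 1 < P + l then p.1.1 + 1 else P, by
    by_cases h : p.1.1 + 1 < P + l
    · rwa [if_pos h]
    · rw [if_neg h]; omega⟩, step δf (x p.1.1) d.val p.2)

lemma autoNext_fst (x : ℕ → Fin K) (P l : ℕ) (hl : 0 < l)
    (p : Fin (P + l) × (Fin N × Bool)) (d : Fin K) :
    ((autoNext δf x P l hl p d).1 : ℕ) =
      if (p.1 : ℕ) + 1 < P + l then (p.1 : ℕ) + 1 else P := rfl

lemma autoNext_snd (x : ℕ → Fin K) (P l : ℕ) (hl : 0 < l)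
    (p : Fin (P + l) × (Fin N × Bool)) (d : Fin K) :
    (autoNext δf x P l hl p d).2 = step δf (x p.1.1) d.val p.2 := rfl

lemma periodic_automatic (hK : 1 < K) (b : ℕ → Δ)
    {x : ℕ → Fin K} {φ : ℕ → (Fin N × Bool) → Δ} (P l : ℕ) (hl : 0 < l)
    (hx : ∀ i, P ≤ i → x (i + l) = x i) (hφ : ∀ i, P ≤ i → φ (i + l) = φ i)
    (h1 : R1 δf x φ) (h3 : R3 δf q0 x φ b) :
    IsKAutomatic K b := by
  have hK0 : 0 < K := by omega
  have hxmod : ∀ j, x (P + j) = x (P + j % l) := by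
    intro j
    induction j using Nat.strong_induction_on with
    | _ j ih =>
      rcases Nat.lt_or_ge j l with hj | hj
      · rw [Nat.mod_eq_of_lt hj]
      · have e1 : P + j = (P + (j - l)) + l := by omega
        have e2 : j % l = (j - l) % l := by
          conv_lhs => rw [show j = (j - l) + l by omega]
          rw [Nat.add_mod_right]
        rw [e1, hx _ (by omega), e2]
        exact ih (j - l) (by omega)
  have hφmod : ∀ j, φ (P + j) = φ (P + j % l) := by
    intro j
    induction j using Nat.strong_induction_on with
    | _ j ih =>
      rcases Nat.lt_or_ge j l with hj | hj
      · rw [Nat.mod_eq_of_lt hj]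
      · have e1 : P + j = (P + (j - l)) + l := by omega
        have e2 : j % l = (j - l) % l := by
          conv_lhs => rw [show j = (j - l) + l by omega]
          rw [Nat.add_mod_right]
        rw [e1, hφ _ (by omega), e2]
        exact ih (j - l) (by omega)
  set idx : ℕ → ℕ := fun i => if i < P + l then i else P + (i - P) % l with hidx
  have hidxlt : ∀ i, idx i < P + l := by
    intro i
    simp only [hidx]
    by_cases h : i < P + l
    · rwa [if_pos h]
    · rw [if_neg h]
      have := Nat.mod_lt (i - P) hl
      omega
  have hxidx : ∀ i, x (idx i) = x i := by
    intro i
    simp only [hidx]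
    by_cases h : i < P + l
    · rw [if_pos h]
    · rw [if_neg h]
      conv_rhs => rw [show i = P + (i - P) by omega]
      rw [hxmod (i - P)]
  have hφidx : ∀ i, φ (idx i) = φ i := by
    intro i
    simp only [hidx]
    by_cases h : i < P + l
    · rw [if_pos h]
    · rw [if_neg h]
      conv_rhs => rw [show i = P + (i - P) by omega]
      rw [hφmod (i - P)]
  have hidxsucc : ∀ L, (if idx L + 1 < P + l then idx L + 1 else P) = idx (L + 1) := by
    intro L
    simp only [hidx]
    by_cases h : L + 1 < P + l
    · rw [if_pos (by omega : L < P + l), if_pos h, if_pos h]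
    · by_cases h2 : L < P + l
      · have hL : L + 1 = P + l := by omega
        rw [if_pos h2, if_neg (by omega), if_neg h]
        have : (L + 1 - P) % l = 0 := by
          rw [show L + 1 - P = l by omega, Nat.mod_self]
        omega
      · rw [if_neg h2, if_neg h]
        have hm := Nat.mod_lt (L - P) hl
        have e2 : L + 1 - P = (L - P) + 1 := by omega
        rw [e2, mod_succ_eq _ _ hl]
        by_cases hc : (L - P) % l + 1 = l
        · rw [if_pos hc, if_neg (by omega)]
          omega
        · rw [if_neg hc, if_pos (by omega)]
          omega
  apply isKAutomatic_of_fintype (S := Fin (P + l) × (Fin N × Bool)) K b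
    (autoNext δf x P l hl) (⟨⟨0, by omega⟩, (q0, false)⟩) (fun p => φ p.1.1 p.2)
  intro m w hw
  have hval : valF w = m := hw
  have inv : ∀ w : List (Fin K),
      ((w.foldl (autoNext δf x P l hl) (⟨⟨0, by omega⟩, (q0, false)⟩)).1 : ℕ)
        = idx w.length ∧
      (w.foldl (autoNext δf x P l hl) (⟨⟨0, by omega⟩, (q0, false)⟩)).2
        = simNat δf (listPre x w.length) (valF w) (q0, false) := by
    intro w
    induction w using List.reverseRecOn with
    | nil =>
      constructor
      · show (0 : ℕ) = idx 0
        simp only [hidx]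
        rw [if_pos (by omega)]
      · rfl
    | append_singleton w d ih =>
      obtain ⟨ih1, ih2⟩ := ih
      have hL : (w ++ [d]).length = w.length + 1 := by simp
      have hvw : valF (w ++ [d]) = valF w + K ^ w.length * d.val := by
        rw [valF_append, valF_cons, valF_nil]
        ring_nf
      have hwlt : valF w < K ^ w.length := valF_lt w
      rw [List.foldl_append]
      simp only [List.foldl_cons, List.foldl_nil]
      constructor
      · rw [autoNext_fst, ih1, hidxsucc w.length, hL]
      · rw [autoNext_snd, ih2, ih1, hxidx, hL, hvw, listPre_succ, simNat_append,
          listPre_length]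
        have e1 : (valF w + K ^ w.length * d.val) / K ^ w.length = d.val := by
          rw [Nat.add_mul_div_left _ _ (pow_pos hK0 _), Nat.div_eq_of_lt hwlt]
          omega
        have e2 : (valF w + K ^ w.length * d.val) % K ^ w.length = valF w := by
          rw [Nat.add_mul_mod_self_left, Nat.mod_eq_of_lt hwlt]
        rw [simNat_cons, simNat_nil, e1, Nat.mod_eq_of_lt d.isLt]
        have e3 : simNat δf (listPre x w.length) (valF w + K ^ w.length * d.val) (q0, false)
            = simNat δf (listPre x w.length) (valF w) (q0, false) := by
          conv_lhs => rw [simNat_mod δf (listPre x w.length), listPre_length, e2]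
        rw [e3]
  obtain ⟨i1, i2⟩ := inv w
  show b m = φ _ _
  rw [i1, i2, hφidx w.length, hval]
  exact h3 w.length m (by rw [← hval]; exact valF_lt w)

end Automaton

end RevLexAux

/-- If `a` is `k`-automatic, then the lexicographically least sequence in the
reverse orbit closure of `a` is `k`-automatic. -/
theorem lexLeast_revOrbitClosure_automatic {Δ : Type*} [Fintype Δ]
    [LinearOrder Δ] (k : ℕ) (hk : 2 ≤ k) (a b : ℕ → Δ) (ha : IsKAutomatic k a)
    (hb : InRevOrbitClosure a b)
    (hleast : ∀ c : ℕ → Δ, InRevOrbitClosure a c → SeqLexLe b c) :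
    IsKAutomatic k b := by
  classical
  obtain ⟨N, δf, q0, τf, H⟩ := ha
  have hK : 1 < k := by omega
  obtain ⟨x, φ, h1, h2, h3⟩ := RevLexAux.exists_rep δf q0 τf hK a b H hb
  obtain ⟨Pa, Pb, hne, hDeq⟩ := Finite.exists_ne_map_eq_of_infinite
    (fun P => (φ P, RevLexAux.OAt (Δ := Δ) δf q0 x P, RevLexAux.AAt δf q0 x P))
  rw [Prod.mk.injEq, Prod.mk.injEq] at hDeq
  obtain ⟨hφeq, hOeq, hAeq⟩ := hDeq
  rcases Nat.lt_or_gt_of_ne hne with hlt | hlt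
  · obtain ⟨x', φ', P', l, hl, hx', hφ', r1', r3'⟩ :=
      RevLexAux.exchange_core δf q0 τf hK a b H h1 h2 h3 hleast Pa Pb hlt hφeq hOeq hAeq
    exact RevLexAux.periodic_automatic δf q0 hK b P' l hl hx' hφ' r1' r3'
  · obtain ⟨x', φ', P', l, hl, hx', hφ', r1', r3'⟩ :=
      RevLexAux.exchange_core δf q0 τf hK a b H h1 h2 h3 hleast Pb Pa hlt hφeq.symm
        hOeq.symm hAeq.symm
    exact RevLexAux.periodic_automatic δf q0 hK b P' l hl hx' hφ' r1' r3'
end
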